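/- arXiv:1307.7522 — 5 statements merged into one kernel-verified Lean document; each statement's English description precedes it below -/
import Mathlib

section
/- Let R be a noetherian ring and k a natural number. Assume that Spec(R) is connected and that for every prime ideal p of R with dim(R_p) > k one has depth(R_p) ≥ 2. Then Spec(R) is connected in codimension k. -/
open TopologicalSpace

/-- The chain-theoretic codimension of `A` inside `Y`: the infimum, over all
irreducible closed subsets `Z` of `Y` contained in `A`, of the coheight of `Z`
in the poset of irreducible closed subsets of `Y`. -/
noncomputable def codimIn {α : Type*} [TopologicalSpace α] (Y A : Set α) : ℕ∞ :=
  ⨅ (Z : IrreducibleCloseds ↥Y) (_ : (Z : Set ↥Y) ⊆ (Subtype.val ⁻¹' A)), Order.coheight Z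

/-- `Y` is connected in codimension `k`: removing any closed subset of
codimension `> k` leaves a connected set. -/
def ConnectedInCodim {α : Type*} [TopologicalSpace α] (Y : Set α) (k : ℕ∞) : Prop :=
  ∀ A : Set α, IsClosed A → k < codimIn Y A → IsConnected (Y \ A)

/-- `Z` is an irreducible component of `Y` (a maximal irreducible subset of `Y`). -/
def IsIrredCompOf {α : Type*} [TopologicalSpace α] (Z Y : Set α) : Prop :=
  Maximal (fun S => S ⊆ Y ∧ IsIrreducible S) Z

/-- The depth of a Noetherian local ring: the supremum of the lengths of regular
sequences contained in the maximal ideal. -/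
noncomputable def ringDepth (R : Type*) [CommRing R] [IsLocalRing R] : ℕ∞ :=
  ⨆ (rs : List R) (_ : (∀ r ∈ rs, r ∈ IsLocalRing.maximalIdeal R) ∧
    RingTheory.Sequence.IsRegular R rs), (rs.length : ℕ∞)

/-- The Cohen-Macaulay defect `dim R - depth R` of a Noetherian local ring. -/
noncomputable def cmdefLocal (R : Type*) [CommRing R] [IsLocalRing R] : ℕ∞ :=
  ((ringKrullDim R).unbotD 0 : ℕ∞) - ringDepth R

/-- The Cohen-Macaulay defect of a Noetherian ring: the supremum of the
Cohen-Macaulay defects of its localizations at primes. -/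
noncomputable def cmdef (R : Type*) [CommRing R] : ℕ∞ :=
  ⨆ p : PrimeSpectrum R, cmdefLocal (Localization.AtPrime p.asIdeal)

section LocalCore

variable {S : Type*} [CommRing S]

open Ideal

/-- Elements of minimal primes are zero divisors. -/
lemma exists_mul_eq_zero_of_mem_minimalPrimes {p : Ideal S} (hp : p ∈ minimalPrimes S)
    {d : S} (hd : d ∈ p) : ∃ z : S, z ≠ 0 ∧ d * z = 0 := by
  haveI hpP : p.IsPrime := hp.1.1
  set L := Localization.AtPrime p
  have hnil : algebraMap S L d ∈ nilradical L := by
    rw [nilradical_eq_sInf, Submodule.mem_sInf]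
    intro q hq
    haveI : Ideal.IsPrime q := hq
    have h1 := (IsLocalization.isPrime_iff_isPrime_disjoint p.primeCompl L q).mp hq
    have hle : Ideal.comap (algebraMap S L) q ≤ p := by
      intro a ha
      by_contra hap
      exact Set.disjoint_left.mp h1.2 (show a ∈ (p.primeCompl : Set S) from hap) ha
    have : p ≤ Ideal.comap (algebraMap S L) q := hp.2 ⟨h1.1, bot_le⟩ hle
    exact this hd
  obtain ⟨n, hn⟩ := mem_nilradical.mp hnil
  rw [← map_pow] at hn
  obtain ⟨m, hm⟩ := (IsLocalization.map_eq_zero_iff p.primeCompl L _).mp hn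
  -- m * d ^ n = 0, m ∉ p
  clear hn hnil
  induction n with
  | zero =>
    exfalso
    rw [pow_zero, mul_one] at hm
    exact m.2 (hm ▸ p.zero_mem)
  | succ n ih =>
    by_cases h0 : (m : S) * d ^ n = 0
    · exact ih h0
    · exact ⟨(m : S) * d ^ n, h0, by rw [← hm, pow_succ]; ring⟩

lemma isSMulRegular_of_eq_add_nilpotent {t c d : S} (ht : IsSMulRegular S t)
    (hc : IsNilpotent c) (htcd : t = c + d) : IsSMulRegular S d := by
  obtain ⟨n, hcn⟩ := hc
  refine isSMulRegular_iff_right_eq_zero_of_smul.mpr ?_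
  intro z hz
  rw [smul_eq_mul] at hz
  have key : ∀ j : ℕ, t ^ j * z = c ^ j * z := by
    intro j
    induction j with
    | zero => simp
    | succ j ih =>
      calc t ^ (j+1) * z = t * (t ^ j * z) := by ring
        _ = t * (c ^ j * z) := by rw [ih]
        _ = c ^ (j+1) * z + c ^ j * (d * z) := by rw [htcd]; ring
        _ = c ^ (j+1) * z := by rw [hz]; ring
  have h0 : t ^ n * z = 0 := by rw [key n, hcn, zero_mul]
  exact isSMulRegular_iff_right_eq_zero_of_smul.mp (ht.pow n) z
    (by rw [smul_eq_mul, h0])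

end LocalCore

section Core

variable {S : Type*} [CommRing S]
open Ideal RingTheory.Sequence Pointwise

lemma smul_top_eq_span_singleton (x : S) :
    x • (⊤ : Submodule S S) = (Ideal.span {x} : Ideal S) := by
  apply le_antisymm
  · rw [Submodule.smul_def, Submodule.span_le]
    rintro a ⟨m, -, rfl⟩
    exact Ideal.mem_span_singleton'.mpr ⟨m, by simp [smul_eq_mul, mul_comm]⟩
  · rw [Ideal.span_le, Set.singleton_subset_iff]
    have := Submodule.smul_mem_pointwise_smul (1:S) x (⊤ : Submodule S S)
      Submodule.mem_top
    rw [smul_eq_mul, mul_one] at this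
    exact this

lemma quot_smul_reg {x y : S} (h : IsSMulRegular (QuotSMulTop x S) y) :
    ∀ z : S, y * z ∈ Ideal.span {x} → z ∈ Ideal.span {x} := by
  intro z hz
  have h' := (isSMulRegular_quotient_iff_mem_of_smul_mem
    (x • (⊤ : Submodule S S)) y).mp h z
  rw [smul_top_eq_span_singleton] at h'
  exact h' (by rwa [smul_eq_mul])

end Core

section MainCore

variable {S : Type*} [CommRing S] [IsLocalRing S] [IsNoetherianRing S]
open Ideal IsLocalRing RingTheory.Sequence

lemma ringDepth_le_one_of_disconnected (𝔞 𝔟 : Ideal S)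
    (hprod : 𝔞 * 𝔟 ≤ nilradical S)
    (hsep : ∀ q : Ideal S, q.IsPrime → 𝔞 ≤ q → 𝔟 ≤ q → q = maximalIdeal S)
    (ha : ∃ q : Ideal S, q.IsPrime ∧ 𝔞 ≤ q ∧ q ≠ maximalIdeal S)
    (hb : ∃ q : Ideal S, q.IsPrime ∧ 𝔟 ≤ q ∧ q ≠ maximalIdeal S) :
    ringDepth S ≤ 1 := by
  classical
  -- the maximal ideal is contained in the radical of 𝔞 ⊔ 𝔟
  have hsum : maximalIdeal S ≤ (𝔞 ⊔ 𝔟).radical := by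
    intro z hz
    rw [Ideal.radical_eq_sInf, Submodule.mem_sInf]
    rintro J ⟨hJle, hJp⟩
    rw [hsep J hJp (le_trans le_sup_left hJle) (le_trans le_sup_right hJle)]
    exact hz
  -- minimal primes over 𝔞 and 𝔟
  have hmin : ∀ (𝔠 𝔡 : Ideal S), 𝔠 * 𝔡 ≤ nilradical S →
      (∀ q : Ideal S, q.IsPrime → 𝔠 ≤ q → 𝔡 ≤ q → q = maximalIdeal S) →
      (∃ q : Ideal S, q.IsPrime ∧ 𝔠 ≤ q ∧ q ≠ maximalIdeal S) →
      ∃ p₀ ∈ minimalPrimes S, 𝔠 ≤ p₀ := by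
    rintro 𝔠 𝔡 hcd hsep' ⟨q, hq, hcq, hqm⟩
    haveI := hq
    obtain ⟨p₀, hp₀, hp₀q⟩ := Ideal.exists_minimalPrimes_le (I := ⊥) (J := q) bot_le
    refine ⟨p₀, hp₀, ?_⟩
    have hnil : nilradical S ≤ p₀ := by
      rw [nilradical_eq_sInf]
      exact sInf_le hp₀.1.1
    rcases (hp₀.1.1.mul_le).mp (le_trans hcd hnil) with h | h
    · exact h
    · exact absurd (hsep' q hq hcq (le_trans h hp₀q)) hqm
  obtain ⟨pa, hpa, hapa⟩ := hmin 𝔞 𝔟 hprod hsep ha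
  obtain ⟨pb, hpb, hbpb⟩ := hmin 𝔟 𝔞 (by rwa [mul_comm])
    (fun q hq h1 h2 => hsep q hq h2 h1) hb
  -- the nilpotency exponent
  obtain ⟨e₀, he₀⟩ := IsNoetherianRing.isNilpotent_nilradical S
  set e : ℕ := e₀ + 1 with he_def
  have he : nilradical S ^ e = ⊥ := by
    rw [pow_succ, he₀, zero_mul, Ideal.zero_eq_bot]
  have hepos : 0 < e := Nat.succ_pos _
  -- products of e-th powers vanish
  have key : ∀ a ∈ 𝔞, ∀ b ∈ 𝔟, a ^ e * b ^ e = 0 := by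
    intro a ha' b hb'
    have h1 : a * b ∈ nilradical S := hprod (Ideal.mul_mem_mul ha' hb')
    have h2 : (a * b) ^ e ∈ nilradical S ^ e := Ideal.pow_mem_pow h1 e
    rw [he, Ideal.mem_bot] at h2
    rw [← mul_pow]
    exact h2
  -- splitting powers of elements of the maximal ideal
  have split : ∀ w : S, w ∈ maximalIdeal S →
      ∃ (N : ℕ) (a b c d : S), a ∈ 𝔞 ∧ b ∈ 𝔟 ∧ a ^ e ∣ c ∧ b ^ e ∣ d ∧ w ^ N = c + d := by
    intro w hw
    obtain ⟨n, hn⟩ := hsum hw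
    obtain ⟨a, haa, b, hbb, hab⟩ := Submodule.mem_sup.mp hn
    set M : ℕ := 2 * e - 1 with hM_def
    refine ⟨n * M, a, b,
      ∑ i ∈ (Finset.range (M+1)).filter (fun i => e ≤ i), a ^ i * b ^ (M - i) * (M.choose i),
      ∑ i ∈ (Finset.range (M+1)).filter (fun i => ¬ e ≤ i), a ^ i * b ^ (M - i) * (M.choose i),
      haa, hbb, ?_, ?_, ?_⟩
    · refine Finset.dvd_sum ?_
      intro i hi
      rw [Finset.mem_filter] at hi
      exact Dvd.dvd.mul_right (Dvd.dvd.mul_right (pow_dvd_pow a hi.2) _) _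
    · refine Finset.dvd_sum ?_
      intro i hi
      rw [Finset.mem_filter, Finset.mem_range] at hi
      have hle : e ≤ M - i := by omega
      exact Dvd.dvd.mul_right (Dvd.dvd.mul_left (pow_dvd_pow b hle) _) _
    · rw [pow_mul, ← hab, add_pow, Finset.sum_filter_add_sum_filter_not]
  -- obtain the two splittings
  rw [ringDepth]
  refine iSup_le fun rs => iSup_le fun hrs => ?_
  obtain ⟨hmem, hreg⟩ := hrs
  match rs with
  | [] => exact (by norm_num : ((List.length ([] : List S) : ℕ∞)) ≤ 1)
  | [x] => exact (by norm_num : ((List.length [x] : ℕ∞)) ≤ 1)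
  | x :: y :: rest =>
    exfalso
    have hxm : x ∈ maximalIdeal S := hmem x (by simp)
    have hym : y ∈ maximalIdeal S := hmem y (by simp)
    have hw := hreg.toIsWeaklyRegular
    rw [isWeaklyRegular_cons_iff] at hw
    obtain ⟨hx, hw2⟩ := hw
    rw [isWeaklyRegular_cons_iff] at hw2
    have hy : IsSMulRegular (QuotSMulTop x S) y := hw2.1
    have Py := quot_smul_reg hy
    -- splittings
    obtain ⟨N, a, b, c, d, haa, hbb, ⟨u, hu⟩, ⟨v, hv⟩, ht⟩ := split x hxm
    obtain ⟨N₁, a₁, b₁, c₁, d₁, haa₁, hbb₁, ⟨u₁, hu₁⟩, ⟨v₁, hv₁⟩, ht₁⟩ := split y hym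
    set t : S := x ^ N with ht_def
    have ht_reg : IsSMulRegular S t := hx.pow N
    have hca : c ∈ 𝔞 := hu ▸ Ideal.mul_mem_right u _ (Ideal.pow_mem_of_mem _ haa e hepos)
    have hdb : d ∈ 𝔟 := hv ▸ Ideal.mul_mem_right v _ (Ideal.pow_mem_of_mem _ hbb e hepos)
    have hcd : c * d = 0 := by
      rw [hu, hv]
      calc a ^ e * u * (b ^ e * v) = a ^ e * b ^ e * (u * v) := by ring
        _ = 0 := by rw [key a haa b hbb, zero_mul]
    have hd₁c : d₁ * c = 0 := by
      rw [hu, hv₁]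
      calc b₁ ^ e * v₁ * (a ^ e * u) = a ^ e * b₁ ^ e * (v₁ * u) := by ring
        _ = 0 := by rw [key a haa b₁ hbb₁, zero_mul]
    have hc₁d : c₁ * d = 0 := by
      rw [hv, hu₁]
      calc a₁ ^ e * u₁ * (b ^ e * v) = a₁ ^ e * b ^ e * (u₁ * v) := by ring
        _ = 0 := by rw [key a₁ haa₁ b hbb, zero_mul]
    -- c and d are not nilpotent
    have hc_nn : ¬ IsNilpotent c := by
      intro hc
      have hd_reg : IsSMulRegular S d := isSMulRegular_of_eq_add_nilpotent ht_reg hc ht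
      obtain ⟨z, hz0, hdz⟩ := exists_mul_eq_zero_of_mem_minimalPrimes hpb (hbpb hdb)
      exact hz0 (isSMulRegular_iff_right_eq_zero_of_smul.mp hd_reg z
        (by rw [smul_eq_mul, hdz]))
    have hd_nn : ¬ IsNilpotent d := by
      intro hd
      have hc_reg : IsSMulRegular S c := isSMulRegular_of_eq_add_nilpotent ht_reg hd
        (by rw [ht, add_comm])
      obtain ⟨z, hz0, hcz⟩ := exists_mul_eq_zero_of_mem_minimalPrimes hpa (hapa hca)
      exact hz0 (isSMulRegular_iff_right_eq_zero_of_smul.mp hc_reg z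
        (by rw [smul_eq_mul, hcz]))
    -- c is not in (t)
    have hc_not : c ∉ Ideal.span {t} := by
      intro hmem'
      obtain ⟨r, hr⟩ := Ideal.mem_span_singleton'.mp hmem'
      -- hr : r * t = c
      have h1 : c * (1 - r) = r * d := by linear_combination r * ht - hr
      by_cases hru : IsUnit r
      · have hdd : r * (d * d) = 0 := by linear_combination (1 - r) * hcd - d * h1
        have : d * d = 0 := by
          obtain ⟨w, hw⟩ := hru.exists_left_inv
          linear_combination w * hdd - (d * d) * hw
        exact hd_nn ⟨2, by rwa [sq]⟩
      · have hunit : IsUnit (1 - r) := isUnit_one_sub_self_of_mem_nonunits r hru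
        have hcc : (c * c) * (1 - r) = 0 := by linear_combination c * h1 + r * hcd
        have : c * c = 0 := by
          obtain ⟨w, hw⟩ := hunit.exists_right_inv
          linear_combination w * hcc - (c * c) * hw
        exact hc_nn ⟨2, by rwa [sq]⟩
    -- regularity of y modulo powers of x
    have Pn : ∀ (n : ℕ) (z : S), y * z ∈ Ideal.span {x ^ n} → z ∈ Ideal.span {x ^ n} := by
      intro n
      induction n with
      | zero =>
        intro z _
        rw [pow_zero, Ideal.span_singleton_one]
        exact Submodule.mem_top
      | succ n ih =>
        intro z hz
        obtain ⟨w, hw⟩ := Ideal.mem_span_singleton'.mp hz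
        -- hw : w * x ^ (n+1) = y * z
        have h₁ : y * z ∈ Ideal.span {x} :=
          Ideal.mem_span_singleton'.mpr ⟨w * x ^ n, by rw [← hw]; ring⟩
        obtain ⟨z₁, hz₁⟩ := Ideal.mem_span_singleton'.mp (Py z h₁)
        -- hz₁ : z₁ * x = z
        have h₂ : x * (y * z₁ - w * x ^ n) = 0 := by
          linear_combination y * hz₁ - hw
        have h₃ : y * z₁ = w * x ^ n := by
          have := isSMulRegular_iff_right_eq_zero_of_smul.mp hx _ (by
            rw [smul_eq_mul]; exact h₂)
          exact sub_eq_zero.mp this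
        obtain ⟨z₂, hz₂⟩ := Ideal.mem_span_singleton'.mp
          (ih z₁ (Ideal.mem_span_singleton'.mpr ⟨w, h₃.symm⟩))
        exact Ideal.mem_span_singleton'.mpr ⟨z₂, by rw [← hz₁, ← hz₂]; ring⟩
    have PyP : ∀ (P : ℕ) (z : S), y ^ P * z ∈ Ideal.span {t} → z ∈ Ideal.span {t} := by
      intro P
      induction P with
      | zero => intro z hz; rwa [pow_zero, one_mul] at hz
      | succ P ih =>
        intro z hz
        refine ih z (Pn N (y ^ P * z) ?_)
        have : y * (y ^ P * z) = y ^ (P+1) * z := by ring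
        rw [this]
        exact hz
    -- the contradiction
    have hkey : y ^ N₁ * c = c₁ * t := by
      linear_combination c * ht₁ - c₁ * ht + hd₁c - hc₁d
    exact hc_not (PyP N₁ c (Ideal.mem_span_singleton'.mpr ⟨c₁, hkey.symm⟩))

end MainCore

section Glob

/-- Irreducible closed subsets transported along a homeomorphism. -/
def irredClosedsCongr {X Y : Type*} [TopologicalSpace X] [TopologicalSpace Y] (f : X ≃ₜ Y) :
    IrreducibleCloseds X ≃o IrreducibleCloseds Y where
  toFun Z := ⟨f '' Z, Z.2.image f f.continuous.continuousOn, f.isClosedMap _ Z.3⟩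
  invFun W := ⟨f.symm '' W, W.2.image _ f.symm.continuous.continuousOn, f.symm.isClosedMap _ W.3⟩
  left_inv Z := by
    apply IrreducibleCloseds.ext
    simp [Set.image_image]
  right_inv W := by
    apply IrreducibleCloseds.ext
    simp [Set.image_image]
  map_rel_iff' {Z W} := by
    simp only [Equiv.coe_fn_mk]
    exact Set.image_subset_image_iff f.injective

lemma finite_minPrimes {R : Type*} [CommRing R] [IsNoetherianRing R] (I : Ideal R) :
    I.minimalPrimes.Finite := by
  rw [Ideal.minimalPrimes_eq_comap]
  exact (minimalPrimes.finite_of_isNoetherianRing (R ⧸ I)).image _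

open PrimeSpectrum in
lemma exists_strict_generization {R : Type*} [CommRing R] [IsNoetherianRing R]
    (C : Set (PrimeSpectrum R)) (p : PrimeSpectrum R)
    (hpc : p ∈ closure C) (hdisj : ∀ c ∈ C, p ≤ c → False) :
    ∃ q : Ideal R, q.IsPrime ∧ vanishingIdeal C ≤ q ∧ q ≤ p.asIdeal ∧ q ≠ p.asIdeal := by
  have hp' : vanishingIdeal C ≤ p.asIdeal := by
    rw [← zeroLocus_vanishingIdeal_eq_closure] at hpc
    exact (mem_zeroLocus _ _).mp hpc
  obtain ⟨q, hq, hqle⟩ := Ideal.exists_minimalPrimes_le hp'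
  refine ⟨q, hq.1.1, hq.1.2, hqle, ?_⟩
  intro hqp
  rw [hqp] at hq
  -- now p.asIdeal is a minimal prime over the vanishing ideal of C
  have hCsub : C ⊆ ⋃ q' ∈ ((vanishingIdeal C).minimalPrimes \ {p.asIdeal}),
      zeroLocus (q' : Set R) := by
    intro c hc
    have h1 : vanishingIdeal C ≤ c.asIdeal :=
      (mem_zeroLocus _ _).mp (subset_zeroLocus_vanishingIdeal C hc)
    obtain ⟨q'', hq'', hq''le⟩ := Ideal.exists_minimalPrimes_le h1
    have hne : q'' ≠ p.asIdeal := by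
      rintro rfl
      exact hdisj c hc ((asIdeal_le_asIdeal _ _).mp hq''le)
    exact Set.mem_biUnion ⟨hq'', hne⟩
      ((mem_zeroLocus _ _).mpr (SetLike.coe_subset_coe.mpr hq''le))
  have hfin : (((vanishingIdeal C).minimalPrimes \ {p.asIdeal}) : Set (Ideal R)).Finite :=
    (finite_minPrimes _).diff
  have hclosed : IsClosed (⋃ q' ∈ ((vanishingIdeal C).minimalPrimes \ {p.asIdeal}),
      zeroLocus (q' : Set R)) :=
    hfin.isClosed_biUnion (fun q' _ => isClosed_zeroLocus _)
  have hp_in := (closure_minimal hCsub hclosed) hpc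
  obtain ⟨q', hq'mem, hq'le⟩ := Set.mem_iUnion₂.mp hp_in
  have hq'le' : q' ≤ p.asIdeal := SetLike.coe_subset_coe.mp ((mem_zeroLocus _ _).mp hq'le)
  have : p.asIdeal ≤ q' := hq.2 hq'mem.1.1 hq'le'
  exact hq'mem.2 (le_antisymm hq'le' this)

lemma lt_ringKrullDim_of_lt_height {R : Type*} [CommRing R] (p : PrimeSpectrum R) {k : ℕ}
    (h : (k : ℕ∞) < Order.height p) :
    (k : WithBot ℕ∞) < ringKrullDim (Localization.AtPrime p.asIdeal) := by
  have h1 : ((k + 1 : ℕ) : ℕ∞) ≤ Order.height p := by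
    push_cast
    exact Order.add_one_le_of_lt h
  obtain ⟨ser, hlast, hlen⟩ := Order.exists_series_of_le_height p h1
  set S := Localization.AtPrime p.asIdeal
  have hdisj : ∀ i : Fin (ser.length + 1),
      Disjoint (p.asIdeal.primeCompl : Set R) ((ser i).asIdeal : Set R) := by
    intro i
    rw [Set.disjoint_left]
    intro a ha ha'
    have hle : ser i ≤ p := hlast ▸ ser.monotone (Fin.le_last i)
    exact ha (hle ha')
  have hprime : ∀ i : Fin (ser.length + 1),
      (Ideal.map (algebraMap R S) (ser i).asIdeal).IsPrime := fun i =>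
    IsLocalization.isPrime_of_isPrime_disjoint p.asIdeal.primeCompl S _ (ser i).2 (hdisj i)
  let ser' : LTSeries (PrimeSpectrum S) :=
    { length := ser.length
      toFun := fun i => ⟨Ideal.map (algebraMap R S) (ser i).asIdeal, hprime i⟩
      step := fun i => by
        have hlt : ser i.castSucc < ser i.succ := ser.step i
        refine lt_of_le_of_ne (α := PrimeSpectrum S) ?_ ?_
        · exact Ideal.map_mono hlt.le
        · intro heq
          have heq' := congrArg PrimeSpectrum.asIdeal heq
          simp only at heq'
          have h1 := IsLocalization.comap_map_of_isPrime_disjoint p.asIdeal.primeCompl S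
            (ser i.castSucc).2 (hdisj i.castSucc)
          have h2 := IsLocalization.comap_map_of_isPrime_disjoint p.asIdeal.primeCompl S
            (ser i.succ).2 (hdisj i.succ)
          have : (ser i.castSucc).asIdeal = (ser i.succ).asIdeal := by
            rw [← h1, ← h2, heq']
          exact hlt.ne (PrimeSpectrum.ext this) }
  have hk := Order.LTSeries.length_le_krullDim ser'
  have hlen' : ser'.length = k + 1 := hlen
  rw [hlen'] at hk
  show (k : WithBot ℕ∞) < Order.krullDim (PrimeSpectrum S)
  refine lt_of_lt_of_le ?_ hk
  exact_mod_cast Nat.lt_succ_self k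

end Glob

open PrimeSpectrum

/-- **Hartshorne's Connectedness Theorem.** Let `R` be a Noetherian ring and
`k ∈ ℕ`. If `Spec R` is connected and `depth R_p ≥ 2` for every prime `p` with
`dim R_p > k`, then `Spec R` is connected in codimension `k`. -/
theorem spec_connectedInCodim_of_depth_ge_two
    (R : Type*) [CommRing R] [IsNoetherianRing R] (k : ℕ)
    (hconn : ConnectedSpace (PrimeSpectrum R))
    (hdepth : ∀ p : PrimeSpectrum R,
      (k : WithBot ℕ∞) < ringKrullDim (Localization.AtPrime p.asIdeal) →
      2 ≤ ringDepth (Localization.AtPrime p.asIdeal)) :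
    ConnectedInCodim (Set.univ : Set (PrimeSpectrum R)) (k : ℕ∞) := by
  intro A hA hcodim
  have hdiff : (Set.univ \ A) = Aᶜ := by ext z; simp
  -- K1 : points of A have height > k
  have K1 : ∀ p : PrimeSpectrum R, p ∈ A → (k : ℕ∞) < Order.height p := by
    intro p hp
    have hclA : closure ({p} : Set (PrimeSpectrum R)) ⊆ A :=
      closure_minimal (Set.singleton_subset_iff.mpr hp) hA
    set W : IrreducibleCloseds (PrimeSpectrum R) :=
      ⟨closure {p}, isIrreducible_singleton.closure, isClosed_closure⟩ with hW
    set homeo := Homeomorph.Set.univ (PrimeSpectrum R) with hhomeo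
    set Z₀ := irredClosedsCongr homeo.symm W with hZ₀
    have hsub : (Z₀ : Set ↥(Set.univ : Set (PrimeSpectrum R))) ⊆ Subtype.val ⁻¹' A := by
      rintro z ⟨x, hx, rfl⟩
      exact hclA hx
    have hle : codimIn (Set.univ : Set (PrimeSpectrum R)) A ≤ Order.coheight Z₀ :=
      iInf₂_le Z₀ hsub
    have h1 : (k : ℕ∞) < Order.coheight Z₀ := lt_of_lt_of_le hcodim hle
    have h2 : Order.coheight Z₀ = Order.coheight W :=
      Order.coheight_orderIso (irredClosedsCongr homeo.symm) W
    have h3 : Order.coheight W = Order.height p := by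
      have h := Order.height_orderIso (PrimeSpectrum.pointsEquivIrreducibleCloseds R) p
      rw [show (PrimeSpectrum.pointsEquivIrreducibleCloseds R) p = OrderDual.toDual W from rfl,
        Order.height_toDual] at h
      exact h
    rw [h2, h3] at h1
    exact h1
  -- K2 : minimal primes avoid A
  have K2 : ∀ q : PrimeSpectrum R, q.asIdeal ∈ minimalPrimes R → q ∉ A := by
    intro q hq hqA
    have h1 := K1 q hqA
    have hmin : IsMin q := by
      intro b hb
      exact (asIdeal_le_asIdeal _ _).mp (hq.2 ⟨b.2, bot_le⟩ ((asIdeal_le_asIdeal _ _).mpr hb))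
    rw [Order.height_eq_zero.mpr hmin] at h1
    simp at h1
  -- nonemptiness
  obtain ⟨x₀⟩ := hconn.toNonempty
  obtain ⟨m₀, hm₀, _⟩ := Ideal.exists_minimalPrimes_le (I := ⊥) (J := x₀.asIdeal) bot_le
  constructor
  · rw [hdiff]
    exact ⟨⟨m₀, hm₀.1.1⟩, K2 _ hm₀⟩
  · rw [hdiff]
    by_contra hnc
    rw [IsPreconnected] at hnc
    push_neg at hnc
    obtain ⟨u, v, hu, hv, hcover, hne1, hne2, hempty⟩ := hnc
    set C₁ : Set (PrimeSpectrum R) := Aᶜ ∩ u with hC₁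
    set C₂ : Set (PrimeSpectrum R) := Aᶜ ∩ v with hC₂
    have hC₁open : IsOpen C₁ := hA.isOpen_compl.inter hu
    have hC₂open : IsOpen C₂ := hA.isOpen_compl.inter hv
    have hC₁C₂ : C₁ ∩ C₂ = ∅ := by
      rw [← Set.subset_empty_iff, ← hempty]
      rintro z ⟨⟨hz1, hz2⟩, ⟨hz3, hz4⟩⟩
      exact ⟨hz1, hz2, hz4⟩
    set I₁ := vanishingIdeal C₁ with hI₁
    set I₂ := vanishingIdeal C₂ with hI₂
    set X₁ := zeroLocus (I₁ : Set R) with hX₁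
    set X₂ := zeroLocus (I₂ : Set R) with hX₂
    have hX₁cl : X₁ = closure C₁ := zeroLocus_vanishingIdeal_eq_closure C₁
    have hX₂cl : X₂ = closure C₂ := zeroLocus_vanishingIdeal_eq_closure C₂
    have hC₁X₁ : C₁ ⊆ X₁ := hX₁cl ▸ subset_closure
    have hC₂X₂ : C₂ ⊆ X₂ := hX₂cl ▸ subset_closure
    -- X₁ misses C₂ and vice versa
    have hX₁C₂ : X₁ ∩ C₂ = ∅ := by
      rw [Set.eq_empty_iff_forall_notMem]
      rintro z ⟨hz1, hz2⟩
      rw [hX₁cl] at hz1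
      obtain ⟨w, hw1, hw2⟩ := mem_closure_iff.mp hz1 C₂ hC₂open hz2
      exact Set.eq_empty_iff_forall_notMem.mp hC₁C₂ w ⟨hw2, hw1⟩
    have hX₂C₁ : X₂ ∩ C₁ = ∅ := by
      rw [Set.eq_empty_iff_forall_notMem]
      rintro z ⟨hz1, hz2⟩
      rw [hX₂cl] at hz1
      obtain ⟨w, hw1, hw2⟩ := mem_closure_iff.mp hz1 C₁ hC₁open hz2
      exact Set.eq_empty_iff_forall_notMem.mp hC₁C₂ w ⟨hw1, hw2⟩
    -- X₁ ∪ X₂ = univ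
    have hXcover : X₁ ∪ X₂ = Set.univ := by
      rw [Set.eq_univ_iff_forall]
      intro q
      obtain ⟨m', hm', hm'le⟩ := Ideal.exists_minimalPrimes_le (I := ⊥) (J := q.asIdeal) bot_le
      set q₀ : PrimeSpectrum R := ⟨m', hm'.1.1⟩ with hq₀
      have hq₀A : q₀ ∉ A := K2 q₀ hm'
      have hq₀le : q₀ ≤ q := hm'le
      have : q₀ ∈ C₁ ∪ C₂ := by
        rcases hcover hq₀A with h | h
        · exact Or.inl ⟨hq₀A, h⟩
        · exact Or.inr ⟨hq₀A, h⟩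
      have hqcl : q ∈ closure ({q₀} : Set (PrimeSpectrum R)) :=
        (le_iff_mem_closure q₀ q).mp hq₀le
      rcases this with h | h
      · exact Or.inl (hX₁cl ▸ (closure_mono (Set.singleton_subset_iff.mpr h)) hqcl)
      · exact Or.inr (hX₂cl ▸ (closure_mono (Set.singleton_subset_iff.mpr h)) hqcl)
    have hX₁ne : X₁.Nonempty := hne1.imp (fun z hz => hC₁X₁ ⟨hz.1, hz.2⟩)
    have hX₂ne : X₂.Nonempty := hne2.imp (fun z hz => hC₂X₂ ⟨hz.1, hz.2⟩)
    -- B = X₁ ∩ X₂ is nonempty by connectedness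
    have hBne : (X₁ ∩ X₂).Nonempty := by
      by_contra hB
      rw [Set.not_nonempty_iff_eq_empty] at hB
      have hcompl : X₂ = X₁ᶜ := by
        apply Set.eq_of_subset_of_subset
        · intro z hz hz'
          exact Set.eq_empty_iff_forall_notMem.mp hB z ⟨hz', hz⟩
        · intro z hz
          rcases (Set.eq_univ_iff_forall.mp hXcover) z with h | h
          · exact absurd h hz
          · exact h
      have hclopen : IsClopen X₁ := ⟨isClosed_zeroLocus _, by
        rw [← compl_compl X₁, ← hcompl]
        exact (isClosed_zeroLocus _).isOpen_compl⟩
      rcases _root_.isClopen_iff.mp hclopen with h | h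
      · exact Set.not_nonempty_empty (h ▸ hX₁ne)
      · obtain ⟨z, hz⟩ := hX₂ne
        rw [hcompl, h] at hz
        exact hz (Set.mem_univ z)
    -- B is inside A
    have hBA : X₁ ∩ X₂ ⊆ A := by
      rintro z ⟨hz1, hz2⟩
      by_contra hzA
      rcases hcover hzA with h | h
      · exact Set.eq_empty_iff_forall_notMem.mp hX₂C₁ z ⟨hz2, hzA, h⟩
      · exact Set.eq_empty_iff_forall_notMem.mp hX₁C₂ z ⟨hz1, hzA, h⟩
    -- choose p minimal in B
    obtain ⟨z₀, hz₀⟩ := hBne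
    have hz₀le : I₁ ⊔ I₂ ≤ z₀.asIdeal :=
      sup_le (SetLike.coe_subset_coe.mp ((mem_zeroLocus _ _).mp hz₀.1))
        (SetLike.coe_subset_coe.mp ((mem_zeroLocus _ _).mp hz₀.2))
    obtain ⟨pI, hpI, hpIle⟩ := Ideal.exists_minimalPrimes_le hz₀le
    set p : PrimeSpectrum R := ⟨pI, hpI.1.1⟩ with hp_def
    have hpX₁ : p ∈ X₁ := (mem_zeroLocus _ _).mpr
      (SetLike.coe_subset_coe.mpr (le_trans le_sup_left hpI.1.2))
    have hpX₂ : p ∈ X₂ := (mem_zeroLocus _ _).mpr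
      (SetLike.coe_subset_coe.mpr (le_trans le_sup_right hpI.1.2))
    have hpB : p ∈ X₁ ∩ X₂ := ⟨hpX₁, hpX₂⟩
    have hpA : p ∈ A := hBA hpB
    -- closure of p is inside A
    have hclpA : closure ({p} : Set (PrimeSpectrum R)) ⊆ A := by
      refine closure_minimal (Set.singleton_subset_iff.mpr hpA) hA
    -- depth hypothesis applies at p
    have hdim := lt_ringKrullDim_of_lt_height p (K1 p hpA)
    have hd2 := hdepth p hdim
    -- set up the localization
    haveI : pI.IsPrime := hpI.1.1
    set S := Localization.AtPrime p.asIdeal with hS_def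
    set f : R →+* S := algebraMap R S with hf_def
    have hdisj_of_le : ∀ q : Ideal R, q ≤ p.asIdeal →
        Disjoint (p.asIdeal.primeCompl : Set R) (q : Set R) := by
      intro q hq
      rw [Set.disjoint_left]
      intro a ha ha'
      exact ha (hq ha')
    have hcomap_le : ∀ q : Ideal S, q.IsPrime → Ideal.comap f q ≤ p.asIdeal := by
      intro q hq
      have h1 := (IsLocalization.isPrime_iff_isPrime_disjoint p.asIdeal.primeCompl S q).mp hq
      intro a ha
      by_contra hap
      exact Set.disjoint_left.mp h1.2 (show a ∈ (p.asIdeal.primeCompl : Set R) from hap) ha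
    -- verify the hypotheses of the core lemma
    have hprod : (I₁.map f) * (I₂.map f) ≤ nilradical S := by
      rw [nilradical_eq_sInf]
      refine le_sInf ?_
      intro q hq
      haveI : Ideal.IsPrime q := hq
      set q' : PrimeSpectrum R := ⟨Ideal.comap f q, Ideal.IsPrime.comap f⟩ with hq'_def
      have hq'univ : q' ∈ X₁ ∪ X₂ := hXcover ▸ Set.mem_univ q'
      rcases hq'univ with h | h
      · have h1 : I₁ ≤ Ideal.comap f q := SetLike.coe_subset_coe.mp ((mem_zeroLocus _ _).mp h)
        have h2 : I₁.map f ≤ q := le_trans (Ideal.map_mono h1) (Ideal.map_comap_le)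
        exact le_trans Ideal.mul_le_left h2
      · have h1 : I₂ ≤ Ideal.comap f q := SetLike.coe_subset_coe.mp ((mem_zeroLocus _ _).mp h)
        have h2 : I₂.map f ≤ q := le_trans (Ideal.map_mono h1) (Ideal.map_comap_le)
        exact le_trans Ideal.mul_le_right h2
    have hsep : ∀ q : Ideal S, q.IsPrime → I₁.map f ≤ q → I₂.map f ≤ q →
        q = IsLocalRing.maximalIdeal S := by
      intro q hq h1 h2
      haveI := hq
      have hc1 : I₁ ≤ Ideal.comap f q := le_trans Ideal.le_comap_map (Ideal.comap_mono h1)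
      have hc2 : I₂ ≤ Ideal.comap f q := le_trans Ideal.le_comap_map (Ideal.comap_mono h2)
      have hcle : Ideal.comap f q ≤ pI := hcomap_le q hq
      have hple : pI ≤ Ideal.comap f q := hpI.2 ⟨Ideal.IsPrime.comap f, sup_le hc1 hc2⟩ hcle
      have hqeq : Ideal.comap f q = pI := le_antisymm hcle hple
      calc q = Ideal.map f (Ideal.comap f q) :=
            (IsLocalization.map_comap p.asIdeal.primeCompl S q).symm
        _ = Ideal.map f pI := by rw [hqeq]
        _ = IsLocalRing.maximalIdeal S := Localization.AtPrime.map_eq_maximalIdeal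
    have hside : ∀ (C : Set (PrimeSpectrum R)), IsOpen C → C ⊆ Aᶜ → p ∈ closure C →
        ∃ q : Ideal S, q.IsPrime ∧ (vanishingIdeal C).map f ≤ q ∧
          q ≠ IsLocalRing.maximalIdeal S := by
      intro C hCopen hCA hpC
      have hdisjC : ∀ c ∈ C, p ≤ c → False := by
        intro c hc hlec
        have : c ∈ closure ({p} : Set (PrimeSpectrum R)) := (le_iff_mem_closure p c).mp hlec
        exact (hCA hc) (hclpA this)
      obtain ⟨qt, hqt, hqtle, hqtp, hqtne⟩ := exists_strict_generization C p hpC hdisjC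
      have hdisj' := hdisj_of_le qt hqtp
      refine ⟨Ideal.map f qt,
        IsLocalization.isPrime_of_isPrime_disjoint p.asIdeal.primeCompl S qt hqt hdisj',
        Ideal.map_mono hqtle, ?_⟩
      intro heq
      have h1 : Ideal.comap f (Ideal.map f qt) = qt :=
        IsLocalization.comap_map_of_isPrime_disjoint p.asIdeal.primeCompl S hqt hdisj'
      rw [heq] at h1
      rw [show Ideal.comap f (IsLocalRing.maximalIdeal S) = p.asIdeal from
        Localization.AtPrime.comap_maximalIdeal] at h1
      exact hqtne h1.symm
    have ha : ∃ q : Ideal S, q.IsPrime ∧ I₁.map f ≤ q ∧ q ≠ IsLocalRing.maximalIdeal S := by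
      refine hside C₁ hC₁open (Set.inter_subset_left) ?_
      rw [← hX₁cl]; exact hpX₁
    have hb : ∃ q : Ideal S, q.IsPrime ∧ I₂.map f ≤ q ∧ q ≠ IsLocalRing.maximalIdeal S := by
      refine hside C₂ hC₂open (Set.inter_subset_left) ?_
      rw [← hX₂cl]; exact hpX₂
    haveI : IsNoetherianRing S :=
      IsLocalization.isNoetherianRing p.asIdeal.primeCompl S inferInstance
    have hd1 : ringDepth S ≤ 1 :=
      ringDepth_le_one_of_disconnected (I₁.map f) (I₂.map f) hprod hsep ha hb
    have : (2 : ℕ∞) ≤ 1 := le_trans hd2 hd1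
    norm_num at this
end

section
/- Let X = X_1 ∪ … ∪ X_r be the decomposition of X into irreducible components. Then for every index i and every σ ∈ G, the set H_{σ,i} := {(x, σx) : x ∈ X_i} ⊆ X × X is an irreducible component of the separating variety V_sep, and V_sep is the union of all the sets H_{σ,i}. -/
open TopologicalSpace

variable {K : Type*} [Field K]

/-- The Zariski topology on affine space `σ → K`. -/
instance zariskiTopology (σ : Type*) : TopologicalSpace (σ → K) :=
  .generateFrom {U | ∃ I : Ideal (MvPolynomial σ K), U = (MvPolynomial.zeroLocus K I)ᶜ}

variable {m : ℕ}

/-- `f : X → K` is a regular function on `X` (the restriction of a polynomial). -/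
def IsRegularFn (X : Set (Fin m → K)) (f : ↥X → K) : Prop :=
  ∃ p : MvPolynomial (Fin m) K, ∀ x : ↥X, f x = MvPolynomial.eval (x : Fin m → K) p

variable (G : Type*) [Group G]

/-- The `G`-action on `X` is by morphisms (hence automorphisms) of varieties. -/
def IsRegularAction (X : Set (Fin m → K)) [MulAction G ↥X] : Prop :=
  ∀ (σ : G) (i : Fin m), IsRegularFn X (fun x => ((σ • x : ↥X) : Fin m → K) i)

/-- `f : X → K` is a `G`-invariant function. -/
def IsInvariantFn (X : Set (Fin m → K)) [MulAction G ↥X] (f : ↥X → K) : Prop :=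
  ∀ (σ : G) (x : ↥X), f (σ • x) = f x

/-- The separating variety `V_sep ⊆ X × X`, inside `K^m × K^m 'K^{m ⊕ m}`. -/
def sepVariety (X : Set (Fin m → K)) [MulAction G ↥X] : Set ((Fin m ⊕ Fin m) → K) :=
  {z | ∃ x y : ↥X, z = Sum.elim (x : Fin m → K) (y : Fin m → K) ∧
    ∀ f : ↥X → K, IsRegularFn X f → IsInvariantFn G X f → f x = f y}

/-- `X × X` inside `K^{m ⊕ m}`. -/
def prodXX (X : Set (Fin m → K)) : Set ((Fin m ⊕ Fin m) → K) :=
  {z | ∃ x ∈ X, ∃ y ∈ X, z = Sum.elim x y}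

/-- The graph `H_{σ,Y} = {(x, σx) | x ∈ Y}` of `σ` over a subset `Y ⊆ X`. -/
def graphComp (X : Set (Fin m → K)) [MulAction G ↥X] (σ : G) (Y : Set (Fin m → K)) :
    Set ((Fin m ⊕ Fin m) → K) :=
  {z | ∃ x : ↥X, (x : Fin m → K) ∈ Y ∧
    z = Sum.elim (x : Fin m → K) ((σ • x : ↥X) : Fin m → K)}

/-- The fixed-point set `X^σ`, as a subset of the ambient affine space. -/
def fixedPts (X : Set (Fin m → K)) [MulAction G ↥X] (σ : G) : Set (Fin m → K) :=
  {v | ∃ h : v ∈ X, σ • (⟨v, h⟩ : ↥X) = ⟨v, h⟩}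

/-- A set `S` of functions on `X` separates as well as all invariants do. -/
def IsSeparating (X : Set (Fin m → K)) [MulAction G ↥X] (S : Set (↥X → K)) : Prop :=
  ∀ x y : ↥X, (∃ f : ↥X → K, IsRegularFn X f ∧ IsInvariantFn G X f ∧ f x ≠ f y) →
    ∃ g ∈ S, g x ≠ g y

/-- A regular (polynomial) map between algebraic sets. -/
def IsRegularMap {α β : Type*} (A : Set (α → K)) (B : Set (β → K)) (φ : ↥A → ↥B) : Prop :=
  ∀ j : β, ∃ p : MvPolynomial α K, ∀ x : ↥A, (φ x : β → K) j = MvPolynomial.eval (x : α → K) p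

/-- Isomorphism of algebraic sets (mutually inverse regular maps). -/
def VarIso {α β : Type*} (A : Set (α → K)) (B : Set (β → K)) : Prop :=
  ∃ (φ : ↥A → ↥B) (ψ : ↥B → ↥A), IsRegularMap A B φ ∧ IsRegularMap B A ψ ∧
    Function.LeftInverse ψ φ ∧ Function.RightInverse ψ φ


-- ==================== auxiliary lemmas ====================
namespace SepAux
open MvPolynomial Set

lemma isClosed_zeroLocus {σ : Type*} (I : Ideal (MvPolynomial σ K)) :
    IsClosed (MvPolynomial.zeroLocus K I) := by
  rw [← isOpen_compl_iff]
  exact TopologicalSpace.isOpen_generateFrom_of_mem ⟨I, rfl⟩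

lemma eval_bind₁' {α β : Type*} (g : α → K) (Q : β → MvPolynomial α K) (f : MvPolynomial β K) :
    eval g (bind₁ Q f) = eval (fun j => eval g (Q j)) f := by
  show eval₂Hom (RingHom.id K) g (bind₁ Q f) = _
  rw [eval₂Hom_bind₁]; rfl

lemma continuous_polymap {α β : Type*} (P : β → MvPolynomial α K) :
    Continuous (fun v : α → K => fun j => eval v (P j)) := by
  rw [continuous_generateFrom_iff]
  rintro U ⟨I, rfl⟩
  have heq : (fun v : α → K => fun j => eval v (P j)) ⁻¹' (zeroLocus K I)ᶜ
      = (zeroLocus K (Ideal.span ((fun f => bind₁ P f) '' (I : Set (MvPolynomial β K)))))ᶜ := by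
    ext v
    simp only [mem_preimage, mem_compl_iff, mem_zeroLocus_iff, zeroLocus_span, mem_setOf_eq, aeval_eq_eval]
    rw [Set.forall_mem_image]
    constructor
    · intro h h'; exact h fun f hf => by rw [← eval_bind₁']; exact h' hf
    · intro h h'; exact h fun f hf => by rw [eval_bind₁']; exact h' f hf
  rw [heq]
  exact TopologicalSpace.isOpen_generateFrom_of_mem ⟨_, rfl⟩

lemma isIrreducible_preimage_val {α : Type*} [TopologicalSpace α] {X W : Set α}
    (hWX : W ⊆ X) (hW : IsIrreducible W) : IsIrreducible (Subtype.val ⁻¹' W : Set ↥X) := by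
  constructor
  · obtain ⟨w, hw⟩ := hW.nonempty; exact ⟨⟨w, hWX hw⟩, hw⟩
  · rintro u v hu hv ⟨x, hx, hxu⟩ ⟨y, hy, hyv⟩
    rw [isOpen_induced_iff] at hu hv
    obtain ⟨U, hU, rfl⟩ := hu; obtain ⟨V, hV, rfl⟩ := hv
    obtain ⟨z, hzW, hzU, hzV⟩ := hW.2 U V hU hV ⟨x, hx, hxu⟩ ⟨y, hy, hyv⟩
    exact ⟨⟨z, hWX hzW⟩, hzW, hzU, hzV⟩

lemma exists_irredCompOf_mem {α : Type*} [TopologicalSpace α] {X : Set α} {x : α} (hx : x ∈ X) :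
    ∃ Z : Set α, IsIrredCompOf Z X ∧ x ∈ Z := by
  refine ⟨Subtype.val '' irreducibleComponent (⟨x, hx⟩ : ↥X),
    ⟨⟨?_, ?_⟩, ?_⟩, ⟨_, mem_irreducibleComponent, rfl⟩⟩
  · rintro _ ⟨c, _, rfl⟩; exact c.2
  · exact isIrreducible_irreducibleComponent.image _ continuous_subtype_val.continuousOn
  · rintro W ⟨hWX, hW⟩ hZW
    have h1 : irreducibleComponent (⟨x, hx⟩ : ↥X) ⊆ Subtype.val ⁻¹' W :=
      fun c hc => hZW ⟨c, hc, rfl⟩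
    have h3 := eq_irreducibleComponent (isIrreducible_preimage_val hWX hW).2 h1
    intro w hw
    exact ⟨⟨w, hWX hw⟩, h3 ▸ (hw : (⟨w, hWX hw⟩ : ↥X) ∈ Subtype.val ⁻¹' W), rfl⟩

lemma exists_vanish_single {a b : Fin m → K} (hab : a ≠ b) :
    ∃ p : MvPolynomial (Fin m) K, eval a p = 0 ∧ eval b p = 1 := by
  obtain ⟨i, hi⟩ := Function.ne_iff.mp hab
  refine ⟨C (b i - a i)⁻¹ * (X i - C (a i)), by simp, ?_⟩
  simp [inv_mul_cancel₀ (sub_ne_zero.mpr (Ne.symm hi))]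

lemma exists_vanish_finset (A : Finset (Fin m → K)) (b : Fin m → K) (hb : b ∉ A) :
    ∃ p : MvPolynomial (Fin m) K, (∀ a ∈ A, eval a p = 0) ∧ eval b p = 1 := by
  choose p hp0 hp1 using fun (a : A) =>
    exists_vanish_single (a := a.1) (b := b) (fun h => hb (h ▸ a.2))
  refine ⟨∏ a ∈ A.attach, p a, ?_, ?_⟩
  · intro a ha
    rw [map_prod]
    exact Finset.prod_eq_zero (Finset.mem_attach _ ⟨a, ha⟩) (hp0 ⟨a, ha⟩)
  · rw [map_prod]
    exact Finset.prod_eq_one fun a _ => hp1 a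

lemma exists_vanish_eq_one (A B : Finset (Fin m → K)) (hd : ∀ a ∈ A, a ∉ B) :
    ∃ p : MvPolynomial (Fin m) K, (∀ a ∈ A, eval a p = 0) ∧ (∀ b ∈ B, eval b p = 1) := by
  classical
  choose q hq0 hq1 using fun (b : B) =>
    exists_vanish_finset (A ∪ B.erase b.1) b.1
      (by simp only [Finset.mem_union, Finset.mem_erase]
          rintro (h | ⟨h, -⟩)
          · exact hd _ h b.2
          · exact h rfl)
  refine ⟨∑ b ∈ B.attach, q b, ?_, ?_⟩
  · intro a ha
    rw [map_sum]
    exact Finset.sum_eq_zero fun b _ => hq0 b a (Finset.mem_union_left _ ha)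
  · intro b hb
    rw [map_sum, Finset.sum_eq_single (⟨b, hb⟩ : B)]
    · exact hq1 ⟨b, hb⟩
    · intro c _ hc
      refine hq0 c b (Finset.mem_union_right _ (Finset.mem_erase.mpr ⟨?_, hb⟩))
      exact fun h => hc (Subtype.ext h.symm)
    · exact fun h => absurd (Finset.mem_attach _ _) h

section Action
variable {G : Type*} [Group G] {X : Set (Fin m → K)} [MulAction G ↥X]

/-- Invariant regular functions separate orbits. -/
lemma orbit_sep [Finite G] (hact : IsRegularAction G X) (x y : ↥X)
    (h : ∀ f : ↥X → K, IsRegularFn X f → IsInvariantFn G X f → f x = f y) :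
    ∃ σ : G, σ • x = y := by
  classical
  cases nonempty_fintype G
  by_contra hc
  push_neg at hc
  set A : Finset (Fin m → K) :=
    Finset.image (fun σ : G => ((σ • x : ↥X) : Fin m → K)) Finset.univ with hA
  set B : Finset (Fin m → K) :=
    Finset.image (fun σ : G => ((σ • y : ↥X) : Fin m → K)) Finset.univ with hB
  have hd : ∀ a ∈ A, a ∉ B := by
    intro a ha hb
    simp only [hA, hB, Finset.mem_image, Finset.mem_univ, true_and] at ha hb
    obtain ⟨σ, rfl⟩ := ha
    obtain ⟨τ, hτ⟩ := hb
    apply hc (τ⁻¹ * σ)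
    rw [mul_smul, Subtype.ext hτ.symm, inv_smul_smul]
  obtain ⟨p, hp0, hp1⟩ := exists_vanish_eq_one A B hd
  choose P hP using fun (σ : G) (i : Fin m) => hact σ i
  set f : ↥X → K := fun v => ∏ σ : G, eval ((σ • v : ↥X) : Fin m → K) p with hf
  have hreg : IsRegularFn X f := by
    refine ⟨∏ σ : G, bind₁ (P σ) p, fun v => ?_⟩
    rw [hf, map_prod]
    refine Finset.prod_congr rfl fun σ _ => ?_
    rw [eval_bind₁']
    have hPv : ((σ • v : ↥X) : Fin m → K) = fun j => eval (v : Fin m → K) (P σ j) :=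
      funext fun i => hP σ i v
    rw [hPv]
  have hinv : IsInvariantFn G X f := by
    intro τ v
    simp only [hf]
    simp_rw [← mul_smul]
    exact Equiv.prod_comp (Equiv.mulRight τ) (fun σ => eval ((σ • v : ↥X) : Fin m → K) p)
  have h0 : f x = 0 :=
    Finset.prod_eq_zero (Finset.mem_univ (1 : G))
      (hp0 _ (Finset.mem_image_of_mem _ (Finset.mem_univ (1 : G))))
  have h1 : f y = 1 :=
    Finset.prod_eq_one fun σ _ => hp1 _ (Finset.mem_image_of_mem _ (Finset.mem_univ σ))
  rw [h f hreg hinv, h1] at h0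
  exact one_ne_zero h0

lemma graph_subset_sep {σ : G} {Z : Set (Fin m → K)} :
    graphComp G X σ Z ⊆ sepVariety G X := by
  rintro _ ⟨x, hxZ, rfl⟩
  exact ⟨x, σ • x, rfl, fun f _ hinv => (hinv σ x).symm⟩

lemma sep_eq_iUnion [Finite G] (hact : IsRegularAction G X) :
    sepVariety G X = ⋃ σ : G, graphComp G X σ X := by
  ext z
  constructor
  · rintro ⟨x, y, rfl, hfxy⟩
    obtain ⟨σ, hσ⟩ := orbit_sep hact x y hfxy
    exact Set.mem_iUnion.mpr ⟨σ, x, x.2, by rw [hσ]⟩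
  · intro hz
    obtain ⟨σ, hσ⟩ := Set.mem_iUnion.mp hz
    exact graph_subset_sep hσ

lemma graph_isIrreducible (hact : IsRegularAction G X) (σ : G) {Z : Set (Fin m → K)}
    (hZX : Z ⊆ X) (hZ : IsIrreducible Z) : IsIrreducible (graphComp G X σ Z) := by
  set P : (Fin m ⊕ Fin m) → MvPolynomial (Fin m) K :=
    Sum.elim MvPolynomial.X (fun i => (hact σ i).choose) with hPdef
  set ψ : ↥X → ((Fin m ⊕ Fin m) → K) :=
    fun x => fun j => eval (x : Fin m → K) (P j) with hψ
  have hψval : ∀ x : ↥X, ψ x = Sum.elim (x : Fin m → K) ((σ • x : ↥X) : Fin m → K) := by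
    intro x
    funext j
    cases j with
    | inl i => simp [hψ, hPdef]
    | inr i =>
      exact ((hact σ i).choose_spec x).symm
  have himg : graphComp G X σ Z = ψ '' (Subtype.val ⁻¹' Z) := by
    ext z
    constructor
    · rintro ⟨x, hxZ, rfl⟩; exact ⟨x, hxZ, hψval x⟩
    · rintro ⟨x, hxZ, rfl⟩; exact ⟨x, hxZ, (hψval x).symm ▸ hψval x⟩
  rw [himg]
  exact (isIrreducible_preimage_val hZX hZ).image _
    ((continuous_polymap P).comp continuous_subtype_val).continuousOn

lemma continuous_fst :
    Continuous (fun z : (Fin m ⊕ Fin m) → K => (fun i => z (Sum.inl i) : Fin m → K)) := by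
  have hfun : (fun z : (Fin m ⊕ Fin m) → K => (fun i => z (Sum.inl i) : Fin m → K))
      = fun v => fun j =>
        eval v (MvPolynomial.X (Sum.inl j) : MvPolynomial (Fin m ⊕ Fin m) K) := by
    funext z i; rw [eval_X]
  rw [hfun]
  exact continuous_polymap _

lemma graph_isClosed (hX : IsClosed X) (hact : IsRegularAction G X) (σ : G) :
    IsClosed (graphComp G X σ X) := by
  set q : Fin m → MvPolynomial (Fin m ⊕ Fin m) K :=
    fun i => MvPolynomial.X (Sum.inr i) - rename Sum.inl (hact σ i).choose with hq
  have heval : ∀ (z : (Fin m ⊕ Fin m) → K) (i : Fin m),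
      eval z (q i) = z (Sum.inr i) - eval (fun j => z (Sum.inl j)) (hact σ i).choose := by
    intro z i
    simp [hq, eval_rename, Function.comp_def]
  have heq : graphComp G X σ X =
      ((fun z : (Fin m ⊕ Fin m) → K => (fun i => z (Sum.inl i) : Fin m → K)) ⁻¹' X) ∩
        zeroLocus K (Ideal.span (Set.range q)) := by
    ext z
    constructor
    · rintro ⟨x, -, rfl⟩
      refine ⟨x.2, ?_⟩
      rw [zeroLocus_span]; simp only [aeval_eq_eval]
      rintro _ ⟨i, rfl⟩
      rw [heval]
      simp only [Sum.elim_inr]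
      rw [sub_eq_zero]
      exact (hact σ i).choose_spec x
    · rintro ⟨h1, h2⟩
      rw [zeroLocus_span] at h2; simp only [aeval_eq_eval] at h2
      refine ⟨⟨fun i => z (Sum.inl i), h1⟩, h1, ?_⟩
      funext j
      cases j with
      | inl i => rfl
      | inr i =>
        have hz0 := h2 (q i) ⟨i, rfl⟩
        rw [heval, sub_eq_zero] at hz0
        have hs := (hact σ i).choose_spec (⟨fun i => z (Sum.inl i), h1⟩ : ↥X)
        simp only [Sum.elim_inr]
        rw [hz0]
        exact hs.symm
  rw [heq]
  exact (hX.preimage continuous_fst).inter (isClosed_zeroLocus _)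

end Action
end SepAux

/-- The irreducible components of the separating variety are exactly the graphs
`H_{σ,i} = {(x, σx) | x ∈ X_i}` for `σ ∈ G` and `X_i` an irreducible component
of `X`, and `V_sep` is the union of all of them. -/
theorem sepVariety_components {K : Type*} [Field K] [IsAlgClosed K] {m : ℕ}
    (X : Set (Fin m → K)) (hX : IsClosed X)
    (G : Type*) [Group G] [Finite G] [MulAction G ↥X] (hact : IsRegularAction G X) :
    (∀ (σ : G) (Z : Set (Fin m → K)), IsIrredCompOf Z X →
      IsIrredCompOf (graphComp G X σ Z) (sepVariety G X)) ∧
    sepVariety G X =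
      ⋃ (σ : G), ⋃ (Z : Set (Fin m → K)) (_ : IsIrredCompOf Z X), graphComp G X σ Z := by
  classical
  cases nonempty_fintype G
  constructor
  · intro σ Z hZ
    obtain ⟨⟨hZX, hZirr⟩, hZmax⟩ := hZ
    refine ⟨⟨SepAux.graph_subset_sep, SepAux.graph_isIrreducible hact σ hZX hZirr⟩, ?_⟩
    rintro S ⟨hSsep, hSirr⟩ hsub
    have hcover : S ⊆ ⋃₀ ↑(Finset.image (fun τ : G => graphComp G X τ X) Finset.univ) := by
      intro z hz
      have hz' := (SepAux.sep_eq_iUnion hact) ▸ hSsep hz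
      obtain ⟨τ, hτ⟩ := Set.mem_iUnion.mp hz'
      exact ⟨graphComp G X τ X, by simp, hτ⟩
    obtain ⟨T, hT, hSt⟩ := (isIrreducible_iff_sUnion_isClosed.mp hSirr) _
      (by intro t ht
          simp only [Finset.mem_image, Finset.mem_univ, true_and] at ht
          obtain ⟨τ, rfl⟩ := ht
          exact SepAux.graph_isClosed hX hact τ) hcover
    simp only [Finset.mem_image, Finset.mem_univ, true_and] at hT
    obtain ⟨τ, rfl⟩ := hT
    have hagree : ∀ x : ↥X, (x : Fin m → K) ∈ Z →
        ((σ • x : ↥X) : Fin m → K) = ((τ • x : ↥X) : Fin m → K) := by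
      intro x hx
      have hmem : Sum.elim (x : Fin m → K) ((σ • x : ↥X) : Fin m → K) ∈ graphComp G X τ X :=
        hSt (hsub ⟨x, hx, rfl⟩)
      obtain ⟨x', -, hxeq⟩ := hmem
      have h1 : (x : Fin m → K) = x' := funext fun i => congrFun hxeq (Sum.inl i)
      have h2 : ((σ • x : ↥X) : Fin m → K) = ((τ • x' : ↥X) : Fin m → K) :=
        funext fun i => congrFun hxeq (Sum.inr i)
      have hx' : x' = x := Subtype.ext h1.symm
      rw [h2, hx']
    have hπS_irr : IsIrreducible
        ((fun z : (Fin m ⊕ Fin m) → K => (fun i => z (Sum.inl i) : Fin m → K)) '' S) :=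
      hSirr.image _ SepAux.continuous_fst.continuousOn
    have hπS_subX :
        ((fun z : (Fin m ⊕ Fin m) → K => (fun i => z (Sum.inl i) : Fin m → K)) '' S) ⊆ X := by
      rintro _ ⟨z, hz, rfl⟩
      obtain ⟨x', -, rfl⟩ := hSt hz
      exact x'.2
    have hZπ : Z ⊆
        ((fun z : (Fin m ⊕ Fin m) → K => (fun i => z (Sum.inl i) : Fin m → K)) '' S) := by
      intro w hw
      exact ⟨Sum.elim w ((σ • (⟨w, hZX hw⟩ : ↥X) : ↥X) : Fin m → K),
        hsub ⟨⟨w, hZX hw⟩, hw, rfl⟩, rfl⟩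
    have hπZ := hZmax ⟨hπS_subX, hπS_irr⟩ hZπ
    intro z hz
    obtain ⟨x', -, rfl⟩ := hSt hz
    have hx'Z : (x' : Fin m → K) ∈ Z := hπZ ⟨_, hz, rfl⟩
    exact ⟨x', hx'Z, by rw [hagree x' hx'Z]⟩
  · ext z
    constructor
    · intro hz
      rw [SepAux.sep_eq_iUnion hact] at hz
      obtain ⟨σ, hσ⟩ := Set.mem_iUnion.mp hz
      obtain ⟨x, -, rfl⟩ := hσ
      obtain ⟨Z, hZ, hxZ⟩ := SepAux.exists_irredCompOf_mem x.2
      exact Set.mem_iUnion.mpr ⟨σ, Set.mem_iUnion.mpr ⟨Z, Set.mem_iUnion.mpr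
        ⟨hZ, x, hxZ, rfl⟩⟩⟩
    · intro hz
      simp only [Set.mem_iUnion] at hz
      obtain ⟨σ, Z, hZ, hmem⟩ := hz
      exact SepAux.graph_subset_sep hmem
end

section
/- The separating variety V_sep is connected if and only if X is connected and G is generated by elements having a fixed point in X. -/
set_option linter.unusedSectionVars false


open TopologicalSpace

variable {K : Type*} [Field K]

variable {m : ℕ}

variable (G : Type*) [Group G]

section SepAux

open MvPolynomial TopologicalSpace

/-! ### Topological preliminaries for the Zariski topology -/

lemma isClosed_eval_zero {α : Type*} (q : MvPolynomial α K) :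
    IsClosed {x : α → K | MvPolynomial.eval x q = 0} := by
  have he : {x : α → K | MvPolynomial.eval x q = 0} = MvPolynomial.zeroLocus K (Ideal.span {q}) := by
    ext x
    rw [MvPolynomial.mem_zeroLocus_iff]
    simp only [MvPolynomial.aeval_eq_eval]
    constructor
    · intro hx p hp
      obtain ⟨c, rfl⟩ := Ideal.mem_span_singleton.mp hp
      rw [map_mul, hx, zero_mul]
    · intro hx
      exact hx q (Ideal.subset_span rfl)
  rw [he, ← isOpen_compl_iff]
  exact isOpen_generateFrom_of_mem ⟨Ideal.span {q}, rfl⟩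

lemma eval_bind₁_eq {α β : Type*} (p : β → MvPolynomial α K) (f : MvPolynomial β K)
    (x : α → K) :
    MvPolynomial.eval x (MvPolynomial.bind₁ p f)
      = MvPolynomial.eval (fun j => MvPolynomial.eval x (p j)) f := by
  show MvPolynomial.eval₂Hom (RingHom.id K) x (MvPolynomial.bind₁ p f) = _
  rw [MvPolynomial.eval₂Hom_bind₁]
  rfl

/-- A map whose coordinates are given by polynomials (composed with a continuous map `v`)
is continuous for the Zariski topology. -/
lemma continuous_of_coord_poly {α β D : Type*} [TopologicalSpace D] {v : D → α → K}
    (hv : Continuous v) (g : D → β → K)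
    (h : ∀ j, ∃ p : MvPolynomial α K, ∀ d, g d j = MvPolynomial.eval (v d) p) :
    Continuous g := by
  choose p hp using h
  have key : ∀ (f : MvPolynomial β K) (d : D),
      MvPolynomial.eval (g d) f = MvPolynomial.eval (v d) (MvPolynomial.bind₁ p f) := by
    intro f d
    rw [eval_bind₁_eq,
      show g d = fun j => MvPolynomial.eval (v d) (p j) from funext fun j => hp j d]
  apply continuous_generateFrom_iff.mpr
  rintro U ⟨I, rfl⟩
  have hpre : g ⁻¹' (MvPolynomial.zeroLocus K I)ᶜ
      = v ⁻¹' (⋃ f ∈ (I : Set (MvPolynomial β K)),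
          {x : α → K | MvPolynomial.eval x (MvPolynomial.bind₁ p f) = 0}ᶜ) := by
    ext d
    simp only [Set.mem_preimage, Set.mem_compl_iff, MvPolynomial.mem_zeroLocus_iff,
      Set.mem_iUnion, Set.mem_setOf_eq, not_forall, exists_prop, MvPolynomial.aeval_eq_eval]
    constructor
    · rintro ⟨f, hf, hne⟩
      exact ⟨f, hf, by rw [← key]; exact hne⟩
    · rintro ⟨f, hf, hne⟩
      exact ⟨f, hf, by rw [key]; exact hne⟩
  rw [hpre]
  exact (isOpen_biUnion fun f _ => (isClosed_eval_zero _).isOpen_compl).preimage hv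

/-! ### Graphs of group elements -/

variable {X : Set (Fin m → K)} [MulAction G ↥X]

lemma graphComp_eq_range (σ : G) :
    graphComp G X σ X
      = Set.range (fun x : ↥X => Sum.elim (x : Fin m → K) ((σ • x : ↥X) : Fin m → K)) := by
  ext z
  constructor
  · rintro ⟨x, -, rfl⟩; exact ⟨x, rfl⟩
  · rintro ⟨x, rfl⟩; exact ⟨x, x.2, rfl⟩

lemma continuous_graphMap (hact : IsRegularAction G X) (σ : G) :
    Continuous (fun x : ↥X => Sum.elim (x : Fin m → K) ((σ • x : ↥X) : Fin m → K)) := by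
  apply continuous_of_coord_poly continuous_subtype_val
  intro j
  cases j with
  | inl i =>
      exact ⟨MvPolynomial.X i, fun x => by simp⟩
  | inr i =>
      obtain ⟨p, hp⟩ := hact σ i
      exact ⟨p, fun x => hp x⟩

lemma isConnected_graphComp (hact : IsRegularAction G X) (hXc : IsConnected X) (σ : G) :
    IsConnected (graphComp G X σ X) := by
  rw [graphComp_eq_range]
  have : ConnectedSpace ↥X := isConnected_iff_connectedSpace.mp hXc
  exact isConnected_range (continuous_graphMap G hact σ)

lemma continuous_comp_inl :
    Continuous (fun z : (Fin m ⊕ Fin m) → K => z ∘ Sum.inl) := by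
  apply continuous_of_coord_poly continuous_id
  intro j
  exact ⟨MvPolynomial.X (Sum.inl j), fun z => by simp⟩

lemma isClosed_graphComp (hX : IsClosed X) (hact : IsRegularAction G X) (σ : G) :
    IsClosed (graphComp G X σ X) := by
  choose p hp using hact σ
  have he : graphComp G X σ X =
      ((fun z : (Fin m ⊕ Fin m) → K => z ∘ Sum.inl) ⁻¹' X) ∩
      ⋂ i : Fin m, {z : (Fin m ⊕ Fin m) → K |
        MvPolynomial.eval z (MvPolynomial.X (Sum.inr i)
          - MvPolynomial.rename Sum.inl (p i)) = 0} := by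
    ext z
    simp only [Set.mem_inter_iff, Set.mem_preimage, Set.mem_iInter, Set.mem_setOf_eq,
      map_sub, MvPolynomial.eval_X, MvPolynomial.eval_rename, sub_eq_zero]
    constructor
    · rintro ⟨x, hxX, rfl⟩
      have h1 : (Sum.elim (x : Fin m → K) ((σ • x : ↥X) : Fin m → K)) ∘ Sum.inl
          = (x : Fin m → K) := rfl
      refine ⟨by rw [h1]; exact x.2, fun i => ?_⟩
      rw [h1]
      exact hp i x
    · rintro ⟨hz, hi⟩
      refine ⟨⟨z ∘ Sum.inl, hz⟩, hz, ?_⟩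
      funext j
      cases j with
      | inl i => rfl
      | inr i =>
          have := hp i ⟨z ∘ Sum.inl, hz⟩
          simpa using (hi i).trans this.symm
  rw [he]
  exact (hX.preimage continuous_comp_inl).inter
    (isClosed_iInter fun i => isClosed_eval_zero _)

lemma graphComp_subset_sepVariety (σ : G) :
    graphComp G X σ X ⊆ sepVariety G X := by
  rintro z ⟨x, -, rfl⟩
  exact ⟨x, σ • x, rfl, fun f _ hinv => (hinv σ x).symm⟩

/-- If two graphs meet, the corresponding "ratio" has a fixed point. -/
lemma graphComp_inter {σ τ : G} {z : (Fin m ⊕ Fin m) → K}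
    (hσ : z ∈ graphComp G X σ X) (hτ : z ∈ graphComp G X τ X) :
    ∃ x : ↥X, (τ⁻¹ * σ) • x = x := by
  obtain ⟨x, -, rfl⟩ := hσ
  obtain ⟨x', -, he⟩ := hτ
  have hx : (x' : Fin m → K) = (x : Fin m → K) := by
    funext i
    exact (congrFun he (Sum.inl i)).symm
  have hx' : x' = x := Subtype.ext hx
  subst hx'
  have h2 : ((σ • x' : ↥X) : Fin m → K) = ((τ • x' : ↥X) : Fin m → K) := by
    funext i
    exact congrFun he (Sum.inr i)
  have h3 : σ • x' = τ • x' := Subtype.ext h2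
  refine ⟨x', ?_⟩
  rw [mul_smul, h3, inv_smul_smul]

/-! ### Invariants separate orbits -/

lemma exists_sep_pair {α : Type*} {a b : α → K} (hab : a ≠ b) :
    ∃ d : MvPolynomial α K, MvPolynomial.eval a d = 0 ∧ MvPolynomial.eval b d = 1 := by
  obtain ⟨i, hi⟩ := Function.ne_iff.mp hab
  refine ⟨MvPolynomial.C (b i - a i)⁻¹ * (MvPolynomial.X i - MvPolynomial.C (a i)), ?_, ?_⟩
  · simp
  · simp only [map_mul, map_sub, MvPolynomial.eval_C, MvPolynomial.eval_X]
    exact inv_mul_cancel₀ (sub_ne_zero.mpr (Ne.symm hi))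

lemma exists_interpolating {α : Type*} (S T : Finset (α → K))
    (hd : ∀ a ∈ S, ∀ b ∈ T, a ≠ b) :
    ∃ p : MvPolynomial α K, (∀ a ∈ S, MvPolynomial.eval a p = 0) ∧
      (∀ b ∈ T, MvPolynomial.eval b p = 1) := by
  classical
  have pair : ∀ a b : α → K, ∃ d : MvPolynomial α K,
      a ≠ b → MvPolynomial.eval a d = 0 ∧ MvPolynomial.eval b d = 1 := by
    intro a b
    by_cases hab : a = b
    · exact ⟨0, fun h => absurd hab h⟩
    · obtain ⟨d, h0, h1⟩ := exists_sep_pair hab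
      exact ⟨d, fun _ => ⟨h0, h1⟩⟩
  choose d hd0 using pair
  refine ⟨∑ b ∈ T, ∏ a ∈ S ∪ T.erase b, d a b, ?_, ?_⟩
  · intro a ha
    rw [map_sum]
    apply Finset.sum_eq_zero
    intro b hb
    rw [map_prod]
    exact Finset.prod_eq_zero (Finset.mem_union_left _ ha) ((hd0 a b (hd a ha b hb)).1)
  · intro b hb
    rw [map_sum, Finset.sum_eq_single b]
    · rw [map_prod]
      apply Finset.prod_eq_one
      intro a ha
      have hab : a ≠ b := by
        rcases Finset.mem_union.mp ha with h | h
        · exact hd a h b hb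
        · exact Finset.ne_of_mem_erase h
      exact (hd0 a b hab).2
    · intro b' hb' hne
      rw [map_prod]
      exact Finset.prod_eq_zero
        (Finset.mem_union_right _ (Finset.mem_erase.mpr ⟨fun h => hne (h.symm ▸ rfl), hb⟩))
        ((hd0 b b' (fun h => hne (h.symm ▸ rfl))).1)
    · intro h
      exact absurd hb h

lemma exists_invariant_sep [Finite G] (hact : IsRegularAction G X) (x y : ↥X)
    (h : ∀ σ : G, σ • x ≠ y) :
    ∃ f : ↥X → K, IsRegularFn X f ∧ IsInvariantFn G X f ∧ f x ≠ f y := by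
  classical
  have : Fintype G := Fintype.ofFinite G
  set S : Finset (Fin m → K) :=
    Finset.image (fun g : G => ((g • x : ↥X) : Fin m → K)) Finset.univ with hS
  set T : Finset (Fin m → K) :=
    Finset.image (fun g : G => ((g • y : ↥X) : Fin m → K)) Finset.univ with hT
  have hdis : ∀ a ∈ S, ∀ b ∈ T, a ≠ b := by
    intro a ha b hb hab
    rw [hS, Finset.mem_image] at ha
    rw [hT, Finset.mem_image] at hb
    obtain ⟨g, -, rfl⟩ := ha
    obtain ⟨g', -, rfl⟩ := hb
    have hgg : g • x = g' • y := Subtype.ext hab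
    apply h (g'⁻¹ * g)
    rw [mul_smul, hgg, inv_smul_smul]
  obtain ⟨q, hq0, hq1⟩ := exists_interpolating S T hdis
  choose P hP using fun (g : G) (i : Fin m) => hact g i
  refine ⟨fun z => ∏ g : G, MvPolynomial.eval ((g • z : ↥X) : Fin m → K) q, ?_, ?_, ?_⟩
  · refine ⟨∏ g : G, MvPolynomial.bind₁ (P g) q, fun z => ?_⟩
    rw [map_prod]
    apply Finset.prod_congr rfl
    intro g _
    rw [eval_bind₁_eq,
      show ((g • z : ↥X) : Fin m → K) = fun i => MvPolynomial.eval (z : Fin m → K) (P g i)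
        from funext fun i => hP g i z]
  · intro σ z
    have := Equiv.prod_comp (Equiv.mulRight σ)
      (fun g : G => MvPolynomial.eval ((g • z : ↥X) : Fin m → K) q)
    simp only [Equiv.coe_mulRight] at this
    show (∏ g : G, MvPolynomial.eval ((g • (σ • z) : ↥X) : Fin m → K) q)
      = ∏ g : G, MvPolynomial.eval ((g • z : ↥X) : Fin m → K) q
    rw [← this]
    apply Finset.prod_congr rfl
    intro g _
    rw [mul_smul]
  · have hx0 : (∏ g : G, MvPolynomial.eval ((g • x : ↥X) : Fin m → K) q) = 0 := by
      apply Finset.prod_eq_zero (Finset.mem_univ (1 : G))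
      apply hq0
      rw [hS, Finset.mem_image]
      exact ⟨1, Finset.mem_univ _, rfl⟩
    have hy1 : (∏ g : G, MvPolynomial.eval ((g • y : ↥X) : Fin m → K) q) = 1 := by
      apply Finset.prod_eq_one
      intro g _
      apply hq1
      rw [hT, Finset.mem_image]
      exact ⟨g, Finset.mem_univ _, rfl⟩
    show (∏ g : G, MvPolynomial.eval ((g • x : ↥X) : Fin m → K) q)
      ≠ ∏ g : G, MvPolynomial.eval ((g • y : ↥X) : Fin m → K) q
    rw [hx0, hy1]
    exact zero_ne_one

lemma sepVariety_eq_iUnion [Finite G] (hact : IsRegularAction G X) :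
    sepVariety G X = ⋃ σ : G, graphComp G X σ X := by
  apply Set.Subset.antisymm
  · rintro z ⟨x, y, rfl, hf⟩
    by_cases hor : ∃ σ : G, σ • x = y
    · obtain ⟨σ, rfl⟩ := hor
      exact Set.mem_iUnion.mpr ⟨σ, x, x.2, rfl⟩
    · push_neg at hor
      obtain ⟨f, hreg, hinv, hne⟩ := exists_invariant_sep G hact x y hor
      exact absurd (hf f hreg hinv) hne
  · exact Set.iUnion_subset fun σ => graphComp_subset_sepVariety G σ

end SepAux

/-- The separating variety is connected if and only if `X` is connected and `G`
is generated by elements having a fixed point in `X`. -/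
theorem sepVariety_connected_iff {K : Type*} [Field K] [IsAlgClosed K] {m : ℕ}
    (X : Set (Fin m → K)) (hX : IsClosed X)
    (G : Type*) [Group G] [Finite G] [MulAction G ↥X] (hact : IsRegularAction G X) :
    IsConnected (sepVariety G X) ↔
      (IsConnected X ∧ Subgroup.closure {σ : G | ∃ x : ↥X, σ • x = x} = ⊤) := by
  classical
  set F : Set G := {σ : G | ∃ x : ↥X, σ • x = x} with hF
  constructor
  · intro h
    obtain ⟨z0, hz0⟩ := h.nonempty
    obtain ⟨x0, y0, -, -⟩ := hz0
    constructor
    · -- X is connected: it is the image of the separating variety under a projection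
      have himg : (fun z : (Fin m ⊕ Fin m) → K => z ∘ Sum.inl) '' sepVariety G X = X := by
        apply Set.Subset.antisymm
        · rintro w ⟨z', ⟨x, y, rfl, -⟩, rfl⟩
          exact x.2
        · intro w hw
          exact ⟨Sum.elim w w, ⟨⟨w, hw⟩, ⟨w, hw⟩, rfl, fun f _ _ => rfl⟩, rfl⟩
      rw [← himg]
      exact h.image _ continuous_comp_inl.continuousOn
    · by_contra hne
      have hex : ∃ τ : G, τ ∉ Subgroup.closure F := by
        by_contra h'
        push_neg at h'
        exact hne (top_unique fun σ _ => h' σ)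
      obtain ⟨τ, hτ⟩ := hex
      set U := ⋃ σ ∈ {σ : G | σ ∈ Subgroup.closure F}, graphComp G X σ X with hU
      set W := ⋃ σ ∈ {σ : G | σ ∉ Subgroup.closure F}, graphComp G X σ X with hW
      have hUc : IsClosed U :=
        Set.Finite.isClosed_biUnion (Set.toFinite _) fun σ _ => isClosed_graphComp G hX hact σ
      have hWc : IsClosed W :=
        Set.Finite.isClosed_biUnion (Set.toFinite _) fun σ _ => isClosed_graphComp G hX hact σ
      have hcover : sepVariety G X ⊆ U ∪ W := by
        rw [sepVariety_eq_iUnion G hact]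
        refine Set.iUnion_subset fun σ => ?_
        by_cases hσ : σ ∈ Subgroup.closure F
        · exact fun z hz => Or.inl (Set.mem_biUnion hσ hz)
        · exact fun z hz => Or.inr (Set.mem_biUnion hσ hz)
      have hdg : Sum.elim (x0 : Fin m → K) (x0 : Fin m → K) ∈ graphComp G X (1 : G) X :=
        ⟨x0, x0.2, by rw [one_smul]⟩
      have hdU : (sepVariety G X ∩ U).Nonempty :=
        ⟨Sum.elim (x0 : Fin m → K) (x0 : Fin m → K),
          ⟨x0, x0, rfl, fun f _ _ => rfl⟩,
          Set.mem_biUnion (show (1 : G) ∈ {σ : G | σ ∈ Subgroup.closure F} from Subgroup.one_mem (Subgroup.closure F)) hdg⟩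
      have heg : Sum.elim (x0 : Fin m → K) ((τ • x0 : ↥X) : Fin m → K) ∈ graphComp G X τ X :=
        ⟨x0, x0.2, rfl⟩
      have heW : (sepVariety G X ∩ W).Nonempty :=
        ⟨Sum.elim (x0 : Fin m → K) ((τ • x0 : ↥X) : Fin m → K),
          graphComp_subset_sepVariety G τ heg, Set.mem_biUnion (show τ ∈ {σ : G | σ ∉ Subgroup.closure F} from hτ) heg⟩
      obtain ⟨z, -, hzU, hzW⟩ :=
        isPreconnected_closed_iff.mp h.isPreconnected U W hUc hWc hcover hdU heW
      obtain ⟨σ, hσmem, hzσ⟩ := Set.mem_iUnion₂.mp hzU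
      obtain ⟨ρ, hρmem, hzρ⟩ := Set.mem_iUnion₂.mp hzW
      have hfix : ρ⁻¹ * σ ∈ F := graphComp_inter G hzσ hzρ
      have h1 : ρ⁻¹ * σ ∈ Subgroup.closure F := Subgroup.subset_closure hfix
      have h2 : ρ⁻¹ ∈ Subgroup.closure F := by
        have := mul_mem h1 (inv_mem hσmem)
        rwa [mul_assoc, mul_inv_cancel, mul_one] at this
      exact hρmem (by simpa using inv_mem h2)
  · rintro ⟨hXc, hgen⟩
    obtain ⟨w0, hw0⟩ := hXc.nonempty
    set x0 : ↥X := ⟨w0, hw0⟩ with hx0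
    set d := Sum.elim (x0 : Fin m → K) (x0 : Fin m → K) with hd
    have hdsep : d ∈ sepVariety G X := ⟨x0, x0, rfl, fun f _ _ => rfl⟩
    set C := connectedComponentIn (sepVariety G X) d with hC
    have step : ∀ s ∈ F, ∀ ρ : G, graphComp G X ρ X ⊆ C → graphComp G X (s * ρ) X ⊆ C := by
      rintro s ⟨xs, hxs⟩ ρ hρ
      set x : ↥X := ρ⁻¹ • xs with hx
      have heq : (s * ρ) • x = ρ • x := by
        rw [mul_smul, hx, smul_inv_smul, hxs]
      have hz1 : Sum.elim (x : Fin m → K) (((s * ρ) • x : ↥X) : Fin m → K)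
          ∈ graphComp G X (s * ρ) X := ⟨x, x.2, rfl⟩
      have hz2 : Sum.elim (x : Fin m → K) (((s * ρ) • x : ↥X) : Fin m → K)
          ∈ graphComp G X ρ X := ⟨x, x.2, by rw [heq]⟩
      have hz2C : Sum.elim (x : Fin m → K) (((s * ρ) • x : ↥X) : Fin m → K) ∈ C := hρ hz2
      have hsub := IsPreconnected.subset_connectedComponentIn
        (isConnected_graphComp G hact hXc (s * ρ)).isPreconnected hz1
        (graphComp_subset_sepVariety G (s * ρ))
      rwa [← connectedComponentIn_eq hz2C] at hsub
    have graph_sub : ∀ σ : G, graphComp G X σ X ⊆ C := by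
      intro σ
      have hσ : σ ∈ Subgroup.closure F := hgen ▸ Subgroup.mem_top σ
      induction hσ using Subgroup.closure_induction_left with
      | one =>
          have hdg : d ∈ graphComp G X (1 : G) X := ⟨x0, x0.2, by rw [one_smul]⟩
          exact IsPreconnected.subset_connectedComponentIn
            (isConnected_graphComp G hact hXc (1 : G)).isPreconnected hdg
            (graphComp_subset_sepVariety G (1 : G))
      | mul_left s hs y hy ih => exact step s hs y ih
      | inv_mul_cancel s hs y hy ih =>
          obtain ⟨xs, hxs⟩ := hs
          have hs' : s⁻¹ ∈ F := ⟨xs, inv_smul_eq_iff.mpr hxs.symm⟩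
          exact step s⁻¹ hs' y ih
    have hCeq : sepVariety G X = C := by
      apply Set.Subset.antisymm
      · rw [sepVariety_eq_iUnion G hact]
        exact Set.iUnion_subset graph_sub
      · exact connectedComponentIn_subset _ _
    exact ⟨⟨d, hdsep⟩, by rw [hCeq]; exact isPreconnected_connectedComponentIn⟩
end

section
/- Let K be an algebraically closed field, G a finite group acting by automorphisms on an affine variety X over K, and A ⊆ K[X]^G a subalgebra such that K[X]^G is contained in the purely inseparable closure of A in K[X]^G (i.e., every invariant has some p^e-th power lying in A, where p = char K). Then any generating set of the K-algebra A is a separating set of invariants. -/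
open TopologicalSpace

variable {K : Type*} [Field K]

variable {m : ℕ}

variable (G : Type*) [Group G]

/-- If `A ⊆ K[X]^G` is a subalgebra such that every invariant has some `p^e`-th
power lying in `A` (purely inseparable closure condition), then every
generating set of the `K`-algebra `A` is a separating set. -/
theorem generating_set_separating_of_purely_inseparable
    {K : Type*} [Field K] [IsAlgClosed K] (p : ℕ) [Fact p.Prime] [CharP K p] {m : ℕ}
    (X : Set (Fin m → K)) (hX : IsClosed X)
    (G : Type*) [Group G] [Finite G] [MulAction G ↥X] (hact : IsRegularAction G X)
    (A : Subalgebra K (↥X → K))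
    (hAinv : ∀ a ∈ A, IsRegularFn X a ∧ IsInvariantFn G X a)
    (hins : ∀ f : ↥X → K, IsRegularFn X f → IsInvariantFn G X f →
      ∃ e : ℕ, f ^ (p ^ e) ∈ A)
    (S : Set (↥X → K)) (hS : Algebra.adjoin K S = A) :
    IsSeparating G X S := by
  intro x y ⟨f, hreg, hinv, hne⟩
  obtain ⟨e, hfA⟩ := hins f hreg hinv
  by_contra h
  push_neg at h
  have hSle : S ⊆ (AlgHom.equalizer (Pi.evalAlgHom K (fun _ : ↥X => K) x)
      (Pi.evalAlgHom K (fun _ : ↥X => K) y) : Subalgebra K (↥X → K)) := by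
    intro g hg
    exact h g hg
  have hAle := Algebra.adjoin_le hSle
  rw [hS] at hAle
  have heq : (f ^ (p ^ e)) x = (f ^ (p ^ e)) y := hAle hfA
  simp only [Pi.pow_apply] at heq
  exact hne ((iterateFrobenius_inj K p e) heq)
end

section
/- Let K be an algebraically closed field of characteristic ≠ 2, let X ⊆ K^4 be the affine variety defined by the equations x_1² = x_3², x_2² = x_4², x_1 x_2 = x_3 x_4, x_1 x_4 = x_2 x_3, and let the group G of order 2 generated by diag(1,1,−1,−1) ∈ GL_4(K) act on X. Then X is the union of the two planes V(x_1 − x_3, x_2 − x_4) and V(x_1 + x_3, x_2 + x_4), which meet only at the origin, the non-identity element of G interchanges these two planes (so fixes only the origin, and G is not generated by reflections on X), and the invariant ring K[X]^G is the polynomial ring K[x̄_1, x̄_2] generated by the images of x_1 and x_2. -/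
open TopologicalSpace

variable {K : Type*} [Field K]

variable {m : ℕ}

variable (G : Type*) [Group G]

section ZariskiAux

open MvPolynomial

variable {K : Type*} [Field K]


lemma zariski_isClosed_zeroLocus {σ : Type*} (I : Ideal (MvPolynomial σ K)) :
    IsClosed (MvPolynomial.zeroLocus K I) :=
  ⟨isOpen_generateFrom_of_mem ⟨I, rfl⟩⟩

lemma eval_eval₂_C {σ τ : Type*} (x : τ → K) (gs : σ → MvPolynomial τ K) (p : MvPolynomial σ K) :
    eval x (eval₂ C gs p) = eval (fun i => eval x (gs i)) p := by
  rw [eval_eval₂]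
  have h : (eval x).comp (C : K →+* MvPolynomial τ K) = RingHom.id K := RingHom.ext fun c => by simp
  rw [h]
  exact eval₂_id _

lemma zariski_basic {σ : Type*} {U : Set (σ → K)} (hU : IsOpen U) :
    ∀ x ∈ U, ∃ p : MvPolynomial σ K, eval x p ≠ 0 ∧ {v | eval v p ≠ 0} ⊆ U := by
  have hU' : TopologicalSpace.GenerateOpen
      {U | ∃ I : Ideal (MvPolynomial σ K), U = (MvPolynomial.zeroLocus K I)ᶜ} U := hU
  clear hU
  induction hU' with
  | basic s hs =>
    obtain ⟨I, rfl⟩ := hs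
    intro x hx
    simp only [Set.mem_compl_iff, MvPolynomial.mem_zeroLocus_iff] at hx
    push_neg at hx
    obtain ⟨p, hpI, hpx⟩ := hx
    exact ⟨p, hpx, fun v hv hv' => hv (hv' p hpI)⟩
  | univ => exact fun x _ => ⟨1, by simp, fun _ _ => trivial⟩
  | inter s t hs ht ihs iht =>
    intro x hx
    obtain ⟨p, hp, hps⟩ := ihs x hx.1
    obtain ⟨q, hq, hqt⟩ := iht x hx.2
    refine ⟨p * q, by simp [hp, hq], fun v hv => ?_⟩
    rw [Set.mem_setOf_eq, map_mul] at hv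
    exact ⟨hps (left_ne_zero_of_mul hv), hqt (right_ne_zero_of_mul hv)⟩
  | sUnion S hS ih =>
    rintro x ⟨t, htS, hxt⟩
    obtain ⟨p, hp, hpt⟩ := ih t htS x hxt
    exact ⟨p, hp, hpt.trans (Set.subset_sUnion_of_mem htS)⟩

lemma zariski_poly_continuous {σ τ : Type*} (P : τ → MvPolynomial σ K) :
    Continuous (fun v (i : τ) => eval v (P i)) := by
  refine continuous_generateFrom_iff.mpr ?_
  rintro s ⟨I, rfl⟩
  have key : (fun v (i : τ) => eval v (P i)) ⁻¹' (MvPolynomial.zeroLocus K I) =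
      MvPolynomial.zeroLocus K (I.map (eval₂Hom (C : K →+* MvPolynomial σ K) P)) := by
    ext v
    simp only [Set.mem_preimage, MvPolynomial.mem_zeroLocus_iff]
    constructor
    · intro h q hq
      have hle : I.map (eval₂Hom (C : K →+* MvPolynomial σ K) P) ≤ RingHom.ker (eval v) :=
        Ideal.map_le_iff_le_comap.mpr fun p hp => by
          simp only [Ideal.mem_comap, RingHom.mem_ker, coe_eval₂Hom]
          rw [eval_eval₂_C]
          exact h p hp
      exact hle hq
    · intro h p hp
      have h2 := h _ (Ideal.mem_map_of_mem _ hp)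
      rw [coe_eval₂Hom, aeval_eq_eval, eval_eval₂_C] at h2
      exact h2
  rw [Set.preimage_compl, key]
  exact (zariski_isClosed_zeroLocus _).isOpen_compl

lemma zariski_irred_range {σ τ : Type*} [Infinite K] (P : τ → MvPolynomial σ K) :
    IsIrreducible (Set.range (fun v (i : τ) => eval v (P i)) : Set (τ → K)) := by
  have huniv : IsIrreducible (Set.univ : Set (σ → K)) := by
    constructor
    · exact ⟨fun _ => 0, trivial⟩
    · rintro u v hu hv ⟨x, -, hxu⟩ ⟨y, -, hyv⟩
      obtain ⟨p, hp, hpu⟩ := zariski_basic hu x hxu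
      obtain ⟨q, hq, hqv⟩ := zariski_basic hv y hyv
      have hpq : p * q ≠ 0 :=
        mul_ne_zero (fun h => hp (by simp [h])) (fun h => hq (by simp [h]))
      have hex : ∃ z, eval z (p * q) ≠ 0 := by
        by_contra h
        push_neg at h
        exact hpq (MvPolynomial.funext fun z => by simp [h z])
      obtain ⟨z, hz⟩ := hex
      rw [map_mul] at hz
      exact ⟨z, trivial, hpu (left_ne_zero_of_mul hz), hqv (right_ne_zero_of_mul hz)⟩
  simpa using huniv.image _ (zariski_poly_continuous P).continuousOn

lemma irr_preimage {α : Type*} [TopologicalSpace α] {X S : Set α} (hS : IsIrreducible S)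
    (hSX : S ⊆ X) : IsIrreducible (Subtype.val ⁻¹' S : Set ↥X) := by
  obtain ⟨⟨s, hsS⟩, hpre⟩ := hS
  refine ⟨⟨⟨s, hSX hsS⟩, hsS⟩, ?_⟩
  rintro u v hu hv ⟨x, hxS, hxu⟩ ⟨y, hyS, hyv⟩
  obtain ⟨u', hu', rfl⟩ := isOpen_induced_iff.mp hu
  obtain ⟨v', hv', rfl⟩ := isOpen_induced_iff.mp hv
  obtain ⟨z, hzS, hzu, hzv⟩ := hpre u' v' hu' hv' ⟨x, hxS, hxu⟩ ⟨y, hyS, hyv⟩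
  exact ⟨⟨z, hSX hzS⟩, hzS, hzu, hzv⟩

lemma aeval_pi_apply {ι α : Type*} (w : ι → (α → K)) (q : MvPolynomial ι K) (x : α) :
    aeval w q x = eval (fun i => w i x) q := by
  rw [aeval_def]
  calc (eval₂ (algebraMap K (α → K)) w q) x
      = (Pi.evalRingHom (fun _ : α => K) x) (eval₂ (algebraMap K (α → K)) w q) := rfl
    _ = eval₂ ((Pi.evalRingHom (fun _ : α => K) x).comp (algebraMap K (α → K)))
        (fun i => w i x) q := eval₂_comp_left _ _ _ _
    _ = eval (fun i => w i x) q := by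
        rw [show (Pi.evalRingHom (fun _ : α => K) x).comp (algebraMap K (α → K)) = RingHom.id K
          from RingHom.ext fun c => rfl]
        exact eval₂_id _


end ZariskiAux

/-- The example of the union of two planes in `K^4` (char K ≠ 2): `X` is the
union of two planes meeting only at the origin, the nontrivial element `g` of
the order-2 group `G = ⟨diag(1,1,-1,-1)⟩` interchanges the two planes and fixes
only the origin (so it is not a reflection on `X`, whence `G` is not generated
by reflections on `X`), yet the invariant ring `K[X]^G` is the polynomial ring
generated by the images of `x₁` and `x₂`. -/
theorem two_planes_example (K : Type*) [Field K] [IsAlgClosed K] (h2 : (2 : K) ≠ 0)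
    (g : (Fin 4 → K) → (Fin 4 → K)) (hg : g = fun v => ![v 0, v 1, -v 2, -v 3])
    (X P₁ P₂ : Set (Fin 4 → K))
    (hXdef : X = {v | v 0 ^ 2 = v 2 ^ 2 ∧ v 1 ^ 2 = v 3 ^ 2 ∧
      v 0 * v 1 = v 2 * v 3 ∧ v 0 * v 3 = v 1 * v 2})
    (hP₁ : P₁ = {v | v 0 = v 2 ∧ v 1 = v 3})
    (hP₂ : P₂ = {v | v 0 = -v 2 ∧ v 1 = -v 3}) :
    X = P₁ ∪ P₂ ∧
    P₁ ∩ P₂ = {0} ∧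
    g '' P₁ = P₂ ∧ g '' P₂ = P₁ ∧
    {v ∈ X | g v = v} = {0} ∧
    ¬ codimIn X {v ∈ X | g v = v} ≤ 1 ∧
    {f : ↥X → K | IsRegularFn X f ∧ ∀ x y : ↥X, g ↑x = ↑y → f y = f x} =
      ↑(Algebra.adjoin K {(fun x : ↥X => (x : Fin 4 → K) 0),
        (fun x : ↥X => (x : Fin 4 → K) 1)}) ∧
    AlgebraicIndependent K
      ![(fun x : ↥X => (x : Fin 4 → K) 0), (fun x : ↥X => (x : Fin 4 → K) 1)] := by
  have hXm : ∀ v : Fin 4 → K, v ∈ X ↔ (v 0 ^ 2 = v 2 ^ 2 ∧ v 1 ^ 2 = v 3 ^ 2 ∧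
      v 0 * v 1 = v 2 * v 3 ∧ v 0 * v 3 = v 1 * v 2) := by
    intro v; rw [hXdef]; exact Iff.rfl
  have hP₁m : ∀ v : Fin 4 → K, v ∈ P₁ ↔ (v 0 = v 2 ∧ v 1 = v 3) := by
    intro v; rw [hP₁]; exact Iff.rfl
  have hP₂m : ∀ v : Fin 4 → K, v ∈ P₂ ↔ (v 0 = -v 2 ∧ v 1 = -v 3) := by
    intro v; rw [hP₂]; exact Iff.rfl
  have hgv : ∀ (v : Fin 4 → K), g v = ![v 0, v 1, -v 2, -v 3] := fun v => by rw [hg]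
  have h1 : X = P₁ ∪ P₂ := by

    ext v
    rw [Set.mem_union, hXm, hP₁m, hP₂m]
    constructor
    · rintro ⟨e1, e2, e3, e4⟩
      have c1 : (v 0 - v 2) * (v 0 + v 2) = 0 := by linear_combination e1
      have c2 : (v 1 - v 3) * (v 1 + v 3) = 0 := by linear_combination e2
      rcases mul_eq_zero.mp c1 with h02 | h02 <;> rcases mul_eq_zero.mp c2 with h13 | h13
      · exact Or.inl ⟨sub_eq_zero.mp h02, sub_eq_zero.mp h13⟩
      · replace h02 := sub_eq_zero.mp h02
        replace h13 := eq_neg_of_add_eq_zero_left h13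
        have h' : (2 : K) * (v 2 * v 3) = 0 := by
          rw [h02, h13] at e3; linear_combination -e3
        rcases mul_eq_zero.mp ((mul_eq_zero.mp h').resolve_left h2) with h | h
        · exact Or.inr ⟨by rw [h02, h, neg_zero], h13⟩
        · exact Or.inl ⟨h02, by rw [h13, h, neg_zero]⟩
      · replace h02 := eq_neg_of_add_eq_zero_left h02
        replace h13 := sub_eq_zero.mp h13
        have h' : (2 : K) * (v 2 * v 3) = 0 := by
          rw [h02, h13] at e3; linear_combination -e3
        rcases mul_eq_zero.mp ((mul_eq_zero.mp h').resolve_left h2) with h | h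
        · exact Or.inl ⟨by rw [h02, h, neg_zero], h13⟩
        · exact Or.inr ⟨h02, by rw [h13, h, neg_zero]⟩
      · exact Or.inr ⟨eq_neg_of_add_eq_zero_left h02, eq_neg_of_add_eq_zero_left h13⟩
    · rintro (⟨ha, hb⟩ | ⟨ha, hb⟩) <;> refine ⟨?_, ?_, ?_, ?_⟩ <;> simp only [ha, hb] <;> ring
  have h2' : P₁ ∩ P₂ = {0} := by
    ext v
    rw [Set.mem_inter_iff, hP₁m, hP₂m, Set.mem_singleton_iff]
    constructor
    · rintro ⟨⟨ha, hb⟩, hc, hd⟩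
      have hv2 : v 2 = 0 := by
        have h' : (2 : K) * v 2 = 0 := by linear_combination hc - ha
        exact (mul_eq_zero.mp h').resolve_left h2
      have hv3 : v 3 = 0 := by
        have h' : (2 : K) * v 3 = 0 := by linear_combination hd - hb
        exact (mul_eq_zero.mp h').resolve_left h2
      have hv0 : v 0 = 0 := by rw [ha, hv2]
      have hv1 : v 1 = 0 := by rw [hb, hv3]
      funext i; fin_cases i <;> simpa using by assumption
    · rintro rfl
      refine ⟨⟨by simp, by simp⟩, by simp, by simp⟩
  have h3' : g '' P₁ = P₂ := by
    ext v
    constructor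
    · rintro ⟨w, hw, rfl⟩
      rw [hP₁m] at hw
      rw [hP₂m, hgv]
      constructor <;> simp [hw.1, hw.2]
    · intro hv
      rw [hP₂m] at hv
      refine ⟨![v 0, v 1, -v 2, -v 3], ?_, ?_⟩
      · rw [hP₁m]; constructor <;> simp [hv.1, hv.2]
      · rw [hgv]; funext i; fin_cases i <;> simp
  have h4' : g '' P₂ = P₁ := by
    ext v
    constructor
    · rintro ⟨w, hw, rfl⟩
      rw [hP₂m] at hw
      rw [hP₁m, hgv]
      constructor <;> simp [hw.1, hw.2]
    · intro hv
      rw [hP₁m] at hv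
      refine ⟨![v 0, v 1, -v 2, -v 3], ?_, ?_⟩
      · rw [hP₂m]; constructor <;> simp [hv.1, hv.2]
      · rw [hgv]; funext i; fin_cases i <;> simp
  have h5' : {v ∈ X | g v = v} = {0} := by
    ext v
    rw [Set.mem_sep_iff, hXm, Set.mem_singleton_iff]
    constructor
    · rintro ⟨⟨e1, e2, e3, e4⟩, hgfix⟩
      rw [hgv] at hgfix
      have hv2 : v 2 = 0 := by
        have h' := congrFun hgfix 2
        simp at h'
        have h'' : (2 : K) * v 2 = 0 := by linear_combination -h'
        exact (mul_eq_zero.mp h'').resolve_left h2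
      have hv3 : v 3 = 0 := by
        have h' := congrFun hgfix 3
        simp at h'
        have h'' : (2 : K) * v 3 = 0 := by linear_combination -h'
        exact (mul_eq_zero.mp h'').resolve_left h2
      have hv0 : v 0 = 0 := sq_eq_zero_iff.mp (by rw [e1, hv2]; ring)
      have hv1 : v 1 = 0 := sq_eq_zero_iff.mp (by rw [e2, hv3]; ring)
      funext i; fin_cases i <;> simpa using by assumption
    · rintro rfl
      refine ⟨⟨by simp, by simp, by simp, by simp⟩, ?_⟩
      rw [hgv]; funext i; fin_cases i <;> simp
  have h6 : ¬ codimIn X ({0} : Set (Fin 4 → K)) ≤ 1 := by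
    classical
    set PL : Fin 4 → MvPolynomial (Fin 1) K :=
      ![MvPolynomial.X 0, 0, MvPolynomial.X 0, 0] with hPL
    set PP : Fin 4 → MvPolynomial (Fin 2) K :=
      ![MvPolynomial.X 0, MvPolynomial.X 1, MvPolynomial.X 0, MvPolynomial.X 1] with hPP
    set L : Set (Fin 4 → K) := {v | v 1 = 0 ∧ v 3 = 0 ∧ v 0 = v 2} with hL
    set Pl : Set (Fin 4 → K) := {v | v 0 = v 2 ∧ v 1 = v 3} with hPl
    have hLr : L = Set.range (fun v (i : Fin 4) => MvPolynomial.eval v (PL i)) := by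
      ext v
      constructor
      · rintro ⟨e1, e3, e02⟩
        refine ⟨fun _ => v 0, ?_⟩
        funext i
        fin_cases i
        · simp [hPL]
        · simp [hPL, e1.symm]
        · simpa [hPL] using e02
        · simp [hPL, e3.symm]
      · rintro ⟨w, rfl⟩
        refine ⟨?_, ?_, ?_⟩ <;> simp [hPL]
    have hPr : Pl = Set.range (fun v (i : Fin 4) => MvPolynomial.eval v (PP i)) := by
      ext v
      constructor
      · rintro ⟨e02, e13⟩
        refine ⟨![v 0, v 1], ?_⟩
        funext i
        fin_cases i
        · simp [hPP]
        · simp [hPP]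
        · simpa [hPP] using e02
        · simpa [hPP] using e13
      · rintro ⟨w, rfl⟩
        refine ⟨?_, ?_⟩ <;> simp [hPP]
    -- closedness
    have hS0c : IsClosed ({0} : Set (Fin 4 → K)) := by
      have heq : ({0} : Set (Fin 4 → K)) = MvPolynomial.zeroLocus K (Ideal.span
          ({MvPolynomial.X 0, MvPolynomial.X 1, MvPolynomial.X 2, MvPolynomial.X 3} : Set (MvPolynomial (Fin 4) K))) := by
        rw [MvPolynomial.zeroLocus_span]
        ext v
        constructor
        · rintro rfl p hp
          rcases hp with rfl | rfl | rfl | rfl <;> simp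
        · intro h
          funext i; fin_cases i
          · simpa using h (MvPolynomial.X 0) (by simp)
          · simpa using h (MvPolynomial.X 1) (by simp)
          · simpa using h (MvPolynomial.X 2) (by simp)
          · simpa using h (MvPolynomial.X 3) (by simp)
      rw [heq]; exact zariski_isClosed_zeroLocus _
    have hLc : IsClosed L := by
      have heq : L = MvPolynomial.zeroLocus K (Ideal.span
          ({MvPolynomial.X 1, MvPolynomial.X 3, MvPolynomial.X 0 - MvPolynomial.X 2} : Set (MvPolynomial (Fin 4) K))) := by
        rw [MvPolynomial.zeroLocus_span]
        ext v
        constructor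
        · rintro ⟨e1, e3, e02⟩ p hp
          rcases hp with rfl | rfl | rfl
          · simpa using e1
          · simpa using e3
          · rw [map_sub, MvPolynomial.aeval_X, MvPolynomial.aeval_X, e02, sub_self]
        · intro h
          refine ⟨by simpa using h (MvPolynomial.X 1) (by simp),
            by simpa using h (MvPolynomial.X 3) (by simp), ?_⟩
          have hh := h (MvPolynomial.X 0 - MvPolynomial.X 2) (by simp)
          rw [map_sub, MvPolynomial.aeval_X, MvPolynomial.aeval_X, sub_eq_zero] at hh
          exact hh
      rw [heq]; exact zariski_isClosed_zeroLocus _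
    have hPc : IsClosed Pl := by
      have heq : Pl = MvPolynomial.zeroLocus K (Ideal.span
          ({MvPolynomial.X 0 - MvPolynomial.X 2, MvPolynomial.X 1 - MvPolynomial.X 3} : Set (MvPolynomial (Fin 4) K))) := by
        rw [MvPolynomial.zeroLocus_span]
        ext v
        constructor
        · rintro ⟨e02, e13⟩ p hp
          rcases hp with rfl | rfl
          · rw [map_sub, MvPolynomial.aeval_X, MvPolynomial.aeval_X, e02, sub_self]
          · rw [map_sub, MvPolynomial.aeval_X, MvPolynomial.aeval_X, e13, sub_self]
        · intro h
          have h02 := h (MvPolynomial.X 0 - MvPolynomial.X 2) (by simp)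
          have h13 := h (MvPolynomial.X 1 - MvPolynomial.X 3) (by simp)
          rw [map_sub, MvPolynomial.aeval_X, MvPolynomial.aeval_X, sub_eq_zero] at h02 h13
          exact ⟨h02, h13⟩
      rw [heq]; exact zariski_isClosed_zeroLocus _
    -- irreducibility
    have hS0i : IsIrreducible ({0} : Set (Fin 4 → K)) := isIrreducible_singleton
    have hLi : IsIrreducible L := by rw [hLr]; exact zariski_irred_range PL
    have hPi : IsIrreducible Pl := by rw [hPr]; exact zariski_irred_range PP
    -- inclusions
    have h0L : ({0} : Set (Fin 4 → K)) ⊆ L := by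
      rintro v rfl
      exact ⟨rfl, rfl, rfl⟩
    have hLP : L ⊆ Pl := by
      rintro v ⟨e1, e3, e02⟩
      exact ⟨e02, e1.trans e3.symm⟩
    have hPX : Pl ⊆ X := by
      rintro v ⟨e02, e13⟩
      rw [hXm]
      refine ⟨by rw [e02], by rw [e13], by rw [e02, e13], by rw [e02, e13]; ring⟩
    have hLX : L ⊆ X := hLP.trans hPX
    have h0X : ({0} : Set (Fin 4 → K)) ⊆ X := h0L.trans hLX
    -- witnesses for strictness
    have hxL : (![1, 0, 1, 0] : Fin 4 → K) ∈ L := ⟨rfl, rfl, rfl⟩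
    have hxLne : (![1, 0, 1, 0] : Fin 4 → K) ∉ ({0} : Set (Fin 4 → K)) := by
      intro h
      have := congrFun (Set.mem_singleton_iff.mp h) 0
      simp at this
    have hxP : (![0, 1, 0, 1] : Fin 4 → K) ∈ Pl := ⟨rfl, rfl⟩
    have hxPne : (![0, 1, 0, 1] : Fin 4 → K) ∉ L := by
      rintro ⟨e1, -, -⟩
      simp [hL] at e1
    -- irreducible closeds in ↥X
    let Z0 : IrreducibleCloseds ↥X :=
      ⟨Subtype.val ⁻¹' ({0} : Set (Fin 4 → K)), irr_preimage hS0i h0X,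
        hS0c.preimage continuous_subtype_val⟩
    let Z1 : IrreducibleCloseds ↥X :=
      ⟨Subtype.val ⁻¹' L, irr_preimage hLi hLX, hLc.preimage continuous_subtype_val⟩
    let Z2 : IrreducibleCloseds ↥X :=
      ⟨Subtype.val ⁻¹' Pl, irr_preimage hPi hPX, hPc.preimage continuous_subtype_val⟩
    have lt01 : Z0 < Z1 := by
      rw [SetLike.lt_iff_le_and_exists]
      exact ⟨fun x hx => h0L hx, ⟨⟨![1, 0, 1, 0], hLX hxL⟩, hxL, hxLne⟩⟩
    have lt12 : Z1 < Z2 := by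
      rw [SetLike.lt_iff_le_and_exists]
      exact ⟨fun x hx => hLP hx, ⟨⟨![0, 1, 0, 1], hPX hxP⟩, hxP, hxPne⟩⟩
    let chain : LTSeries (IrreducibleCloseds ↥X) :=
      ⟨2, ![Z0, Z1, Z2], by
        intro i
        fin_cases i
        · exact lt01
        · exact lt12⟩
    have hhead : chain.head = Z0 := rfl
    have hcoh : (2 : ℕ∞) ≤ Order.coheight Z0 := by
      have h := Order.length_le_coheight (x := Z0) (p := chain) (le_of_eq hhead.symm)
      simpa [chain] using h
    intro hle
    have h2le : (2 : ℕ∞) ≤ codimIn X ({0} : Set (Fin 4 → K)) := by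
      refine le_iInf fun Z => le_iInf fun hZ => ?_
      obtain ⟨x, hx⟩ := Z.isIrreducible.nonempty
      have hZeq : Z = Z0 := by
        apply IrreducibleCloseds.ext
        apply Set.Subset.antisymm hZ
        intro y hy
        have hx0 : (x : Fin 4 → K) = 0 := hZ hx
        have hy0 : (y : Fin 4 → K) = 0 := hy
        have hyx : y = x := Subtype.ext (hy0.trans hx0.symm)
        rw [hyx]; exact hx
      rw [hZeq]
      exact hcoh
    have hfin : (2 : ℕ∞) ≤ 1 := h2le.trans hle
    norm_num at hfin
  have h78 : ({f : ↥X → K | IsRegularFn X f ∧ ∀ x y : ↥X, g ↑x = ↑y → f y = f x} =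
      ↑(Algebra.adjoin K {(fun x : ↥X => (x : Fin 4 → K) 0),
        (fun x : ↥X => (x : Fin 4 → K) 1)})) ∧
      AlgebraicIndependent K
        ![(fun x : ↥X => (x : Fin 4 → K) 0), (fun x : ↥X => (x : Fin 4 → K) 1)] := by
    set c0 : ↥X → K := fun x : ↥X => (x : Fin 4 → K) 0 with hc0
    set c1 : ↥X → K := fun x : ↥X => (x : Fin 4 → K) 1 with hc1
    set w : Fin 2 → (↥X → K) := ![c0, c1] with hw
    have hwr : Set.range w = {c0, c1} := by
      ext z
      constructor
      · rintro ⟨i, rfl⟩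
        fin_cases i
        · exact Or.inl rfl
        · exact Or.inr rfl
      · rintro (rfl | rfl)
        · exact ⟨0, rfl⟩
        · exact ⟨1, rfl⟩
    -- membership of a point (a, b, a, b) in X
    have hdiag : ∀ a b : K, (![a, b, a, b] : Fin 4 → K) ∈ X := by
      intro a b
      rw [hXm]
      refine ⟨by simp, by simp, by simp, by simp [mul_comm]⟩
    -- key evaluation: every invariant regular function is a polynomial in x₀, x₁
    have hkey : ∀ x : ↥X, ∀ p : MvPolynomial (Fin 4) K,
        (∀ z : ↥X, MvPolynomial.eval (z : Fin 4 → K) p =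
          MvPolynomial.eval (z : Fin 4 → K) p) → True := fun _ _ _ => trivial
    constructor
    · -- the set equality
      rw [show Algebra.adjoin K {c0, c1} = (MvPolynomial.aeval w).range by
        rw [← hwr]; exact Algebra.adjoin_range_eq_range_aeval K w]
      ext f
      simp only [Set.mem_setOf_eq, SetLike.mem_coe, AlgHom.mem_range]
      constructor
      · rintro ⟨⟨p, hp⟩, hinv⟩
        -- q = p(x₀, x₁, x₀, x₁) as a polynomial in two variables
        set sub : Fin 4 → MvPolynomial (Fin 2) K :=
          ![MvPolynomial.X 0, MvPolynomial.X 1, MvPolynomial.X 0, MvPolynomial.X 1] with hsub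
        refine ⟨MvPolynomial.eval₂ MvPolynomial.C sub p, ?_⟩
        funext x
        rw [aeval_pi_apply, eval_eval₂_C]
        have harg : (fun i => MvPolynomial.eval (fun j => w j x) (sub i)) =
            ![(x : Fin 4 → K) 0, (x : Fin 4 → K) 1, (x : Fin 4 → K) 0, (x : Fin 4 → K) 1] := by
          funext i
          fin_cases i <;> simp [hsub, hw, hc0, hc1]
        rw [harg]
        -- now show eval ![x0,x1,x0,x1] p = f x
        have hsplit : ∀ v : Fin 4 → K, v ∈ X → v ∈ P₁ ∨ v ∈ P₂ := fun v hv => by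
          rw [h1] at hv; exact hv
        rcases hsplit ↑x x.2 with hx | hx
        · -- x ∈ P₁ : x = (x0, x1, x0, x1)
          rw [hP₁] at hx
          obtain ⟨e02, e13⟩ := hx
          have hxeq : (x : Fin 4 → K) =
              ![(x : Fin 4 → K) 0, (x : Fin 4 → K) 1, (x : Fin 4 → K) 0, (x : Fin 4 → K) 1] := by
            funext i
            fin_cases i
            · rfl
            · rfl
            · exact e02.symm
            · exact e13.symm
          rw [hp x]
          exact congrArg (fun v => MvPolynomial.eval v p) hxeq.symm
        · -- x ∈ P₂ : x = g x' with x' = (x0, x1, x0, x1)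
          rw [hP₂] at hx
          obtain ⟨e02, e13⟩ := hx
          set x' : ↥X := ⟨![(x : Fin 4 → K) 0, (x : Fin 4 → K) 1, (x : Fin 4 → K) 0,
            (x : Fin 4 → K) 1], hdiag _ _⟩ with hx'
          have hgx' : g ↑x' = ↑x := by
            rw [hgv]
            funext i
            fin_cases i
            · simp [hx']
            · simp [hx']
            · simp [hx', e02]
            · simp [hx', e13]
          have := hinv x' x hgx'
          rw [this, hp x']
      · rintro ⟨q, rfl⟩
        constructor
        · -- regular
          refine ⟨MvPolynomial.eval₂ MvPolynomial.C
            (![MvPolynomial.X 0, MvPolynomial.X 1] : Fin 2 → MvPolynomial (Fin 4) K) q, ?_⟩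
          intro x
          rw [aeval_pi_apply, eval_eval₂_C]
          have harg2 : (fun i => MvPolynomial.eval (x : Fin 4 → K)
              ((![MvPolynomial.X 0, MvPolynomial.X 1] : Fin 2 → MvPolynomial (Fin 4) K) i)) =
              fun i => w i x := by
            funext i
            fin_cases i <;> simp [hw, hc0, hc1]
          rw [harg2]
        · -- invariant
          intro x y hxy
          rw [aeval_pi_apply, aeval_pi_apply]
          have h0 : (y : Fin 4 → K) 0 = (x : Fin 4 → K) 0 := by
            rw [← hxy, hgv]; rfl
          have h1' : (y : Fin 4 → K) 1 = (x : Fin 4 → K) 1 := by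
            rw [← hxy, hgv]; rfl
          have harg2 : (fun i => w i y) = fun i => w i x := by
            funext i
            fin_cases i <;> simp [hw, hc0, hc1, h0, h1']
          rw [harg2]
    · -- algebraic independence
      rw [algebraicIndependent_iff]
      intro q hq
      apply MvPolynomial.funext
      intro z
      have hz := congrFun hq ⟨![z 0, z 1, z 0, z 1], hdiag _ _⟩
      rw [aeval_pi_apply] at hz
      simp only [map_zero, Pi.zero_apply] at hz
      have harg : (fun i => w i (⟨![z 0, z 1, z 0, z 1], hdiag (z 0) (z 1)⟩ : ↥X)) = z := by
        funext i
        fin_cases i <;> simp [hw, hc0, hc1]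
      rw [harg] at hz
      rw [hz]
      simp
  exact ⟨h1, h2', h3', h4', h5', by rw [h5']; exact h6, h78.1, h78.2⟩
end
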